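/- arXiv:2602.17178 — 8 statements merged into one kernel-verified Lean document; each statement's English description precedes it below -/
import Mathlib

section
/- Fix t > 0. There exist constants C̃(t) > 0, κ̃(t) > 0 and r₀(t) > ρ such that the function G(r) := f(r)² e^{K̃ t g(r)} is strictly decreasing on [r₀(t),∞) with lim_{r→∞} G(r) = 0, and such that for every u ≥ u₀(t) := κ̃(t)/G(r₀(t)) and every β ≥ r₀(t) satisfying G(β) = κ̃(t)/u, one has sup{ μ({x ∈ ℝ^d : Q_t h(x) > u}) : h measurable, h ≥ 0, ∫_{ℝ^d} h dμ = 1 } ≥ (1/u) · C̃(t) / (g(β)² e^{K̃ t g(β)}). -/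
open MeasureTheory Filter Topology Set

noncomputable section

open MeasureTheory Filter Topology Set

lemma auxG_eq (f g : ℝ → ℝ) (c r : ℝ) (hfr : 0 < f r) :
    f r ^ 2 * Real.exp (c * g r) = Real.exp (2 * Real.log (f r) + c * g r) := by
  rw [show (2 : ℝ) * Real.log (f r) + c * g r
      = Real.log (f r) + (Real.log (f r) + c * g r) by ring,
    Real.exp_add, Real.exp_add, Real.exp_log hfr]
  ring

lemma auxG_anti (f g : ℝ → ℝ) (c : ℝ) (hc : 0 < c)
    (hf_pos : ∀ r > 0, 0 < f r) (hf_anti : StrictAntiOn f (Set.Ioi 0))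
    (hg_pos : ∀ r ≥ 0, 0 < g r)
    (r₀ : ℝ) (hr₀ : 0 < r₀) (hfR : ∀ r ≥ r₀, f r < 1)
    (ha_anti : AntitoneOn (fun r => g r / |Real.log (f r)|) (Set.Ici r₀))
    (ha_small : ∀ r ≥ r₀, g r / |Real.log (f r)| ≤ 1 / (2 * c)) :
    StrictAntiOn (fun r => f r ^ 2 * Real.exp (c * g r)) (Set.Ici r₀) := by
  intro r hr s hs hrs
  simp only
  have hrpos : 0 < r := lt_of_lt_of_le hr₀ hr
  have hspos : 0 < s := lt_of_lt_of_le hr₀ hs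
  have hfr : 0 < f r := hf_pos r hrpos
  have hfs : 0 < f s := hf_pos s hspos
  have hfr1 : f r < 1 := hfR r hr
  have hfs1 : f s < 1 := hfR s hs
  have hLr : Real.log (f r) < 0 := Real.log_neg hfr hfr1
  have hLs : Real.log (f s) < 0 := Real.log_neg hfs hfs1
  have habs_r : |Real.log (f r)| = -Real.log (f r) := abs_of_neg hLr
  have habs_s : |Real.log (f s)| = -Real.log (f s) := abs_of_neg hLs
  have hlog_lt : Real.log (f s) < Real.log (f r) :=
    Real.log_lt_log hfs (hf_anti hrpos hspos hrs)
  set P := -Real.log (f r) with hP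
  set Q := -Real.log (f s) with hQ
  have hPpos : 0 < P := by simp [hP]; linarith
  have hQpos : 0 < Q := by simp [hQ]; linarith
  have hPQ : P < Q := by simp [hP, hQ]; linarith
  set ar := g r / P with har
  set as := g s / Q with has
  have haras : as ≤ ar := by
    have := ha_anti hr hs hrs.le
    simp only [habs_r, habs_s] at this
    exact this
  have har_small : c * ar ≤ 1 / 2 := by
    have h1 := ha_small r hr
    rw [habs_r] at h1
    rw [div_le_div_iff₀ hPpos (by positivity : (0:ℝ) < 2 * c)] at h1
    rw [har, ← mul_div_assoc, div_le_div_iff₀ hPpos (by norm_num : (0:ℝ) < 2)]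
    nlinarith
  have has_nonneg : 0 ≤ as := le_of_lt (div_pos (hg_pos s hspos.le) hQpos)
  have hgr : g r = ar * P := by rw [har]; field_simp
  have hgs : g s = as * Q := by rw [has]; field_simp
  rw [auxG_eq f g c r hfr, auxG_eq f g c s hfs]
  apply Real.exp_lt_exp.mpr
  have hgoal : 2 * Real.log (f s) = -2 * Q := by rw [hQ]; ring
  have hgoal2 : 2 * Real.log (f r) = -2 * P := by rw [hP]; ring
  rw [hgoal, hgoal2, hgr, hgs]
  have e1 : c * (as * Q) ≤ c * (ar * Q) :=
    mul_le_mul_of_nonneg_left (mul_le_mul_of_nonneg_right haras hQpos.le) hc.le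
  have e2 : (c * ar) * (Q - P) ≤ (1/2) * (Q - P) :=
    mul_le_mul_of_nonneg_right har_small (by linarith)
  nlinarith

lemma auxG_tendsto (f g : ℝ → ℝ) (c : ℝ) (hc : 0 < c)
    (hf_pos : ∀ r > 0, 0 < f r)
    (hf_lim : Tendsto f atTop (𝓝 0))
    (hg_pos : ∀ r ≥ 0, 0 < g r)
    (r₀ : ℝ) (hr₀ : 0 < r₀) (hfR : ∀ r ≥ r₀, f r < 1)
    (ha_small : ∀ r ≥ r₀, g r / |Real.log (f r)| ≤ 1 / (2 * c)) :
    Tendsto (fun r => f r ^ 2 * Real.exp (c * g r)) atTop (𝓝 0) := by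
  apply tendsto_of_tendsto_of_tendsto_of_le_of_le' tendsto_const_nhds hf_lim
  · filter_upwards with r
    positivity
  · filter_upwards [eventually_ge_atTop r₀] with r hr
    have hrpos : 0 < r := lt_of_lt_of_le hr₀ hr
    have hfr : 0 < f r := hf_pos r hrpos
    have hfr1 : f r < 1 := hfR r hr
    have hLr : Real.log (f r) < 0 := Real.log_neg hfr hfr1
    have habs_r : |Real.log (f r)| = -Real.log (f r) := abs_of_neg hLr
    have h1 := ha_small r hr
    rw [habs_r] at h1
    have hcg : c * g r ≤ -Real.log (f r) := by
      rw [div_le_div_iff₀ (by linarith) (by positivity : (0:ℝ) < 2 * c)] at h1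
      nlinarith [hg_pos r hrpos.le]
    rw [auxG_eq f g c r hfr]
    calc Real.exp (2 * Real.log (f r) + c * g r)
        ≤ Real.exp (Real.log (f r)) := Real.exp_le_exp.mpr (by linarith)
      _ = f r := Real.exp_log hfr

set_option maxHeartbeats 3000000 in
/-- Theorem `prop:main2`. There exist `C' > 0`, `κ' > 0` and `r₀ > ρ` such
that `G(r) = f(r)² e^{K' t g(r)}` is strictly decreasing on `[r₀,∞)` with `G → 0`, and for
every `u ≥ κ'/G(r₀)` and `β ≥ r₀` with `G(β) = κ'/u`,
`sup over densities h of μ({Q_t h > u}) ≥ (1/u) · C'/(g(β)² e^{K' t g(β)})`. -/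
theorem stmt3
    (d : ℕ) (hd : 1 ≤ d)
    (f g : ℝ → ℝ)
    (hf_pos : ∀ r > 0, 0 < f r)
    (hf_anti : StrictAntiOn f (Set.Ioi 0))
    (hf_cont : ContinuousOn f (Set.Ioi 0))
    (hf_lim : Tendsto f atTop (𝓝 0))
    (f₁ : ℝ → ℝ) (hf₁ : ∀ r, f₁ r = min (f r) 1)
    (hg_pos : ∀ r ≥ 0, 0 < g r)
    (hg_mono : StrictMonoOn g (Set.Ici 0))
    (hg_cont : ContinuousOn g (Set.Ici 0))
    (hg_lim : Tendsto g atTop atTop)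
    -- Condition (D)
    (hD : ∃ R > 0, (∀ r ≥ R, f r < 1) ∧
      AntitoneOn (fun r => g r / |Real.log (f r)|) (Set.Ici R) ∧
      Tendsto (fun r => g r / |Real.log (f r)|) atTop (𝓝 0))
    -- ground state and the measure μ
    (φ₀ : EuclideanSpace ℝ (Fin d) → ℝ) (hφ₀_meas : Measurable φ₀)
    (hφ₀_pos : ∀ x, 0 < φ₀ x)
    (C₁₀ : ℝ) (hC₁₀ : 1 ≤ C₁₀)
    (hφ₀ : ∀ x : EuclideanSpace ℝ (Fin d),
      C₁₀⁻¹ * (f₁ ‖x‖ / g ‖x‖) ≤ φ₀ x ∧ φ₀ x ≤ C₁₀ * (f₁ ‖x‖ / g ‖x‖))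
    (μ : Measure (EuclideanSpace ℝ (Fin d)))
    (hμ : μ = volume.withDensity (fun x => ENNReal.ofReal (φ₀ x ^ 2)))
    (hμ_prob : IsProbabilityMeasure μ)
    -- comparison conditions
    (C₆ C₇ R₀ : ℝ) (hC₆ : 1 ≤ C₆) (hC₇ : 1 ≤ C₇) (hR₀ : 1 ≤ R₀)
    (hf_comp : ∀ r ≥ R₀, f r ≤ C₇ * f (r + 1))
    (hg_comp : ∀ r ≥ R₀, g (r + 1) ≤ C₆ * g r)
    (t : ℝ) (ht : 0 < t)
    -- the semigroup kernels
    (q : ℝ → EuclideanSpace ℝ (Fin d) → EuclideanSpace ℝ (Fin d) → ℝ)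
    (hq_meas : ∀ s > 0, Measurable (Function.uncurry (q s)))
    (hq_nonneg : ∀ s > 0, ∀ x y, 0 ≤ q s x y)
    (hq_CK : ∀ s > 0, ∀ s' > 0, ∀ x y : EuclideanSpace ℝ (Fin d),
      q (s + s') x y = ∫ z, q s x z * q s' z y ∂μ)
    (hq_mass : ∀ s > 0, ∀ x : EuclideanSpace ℝ (Fin d), (∫ y, q s x y ∂μ) = 1)
    -- lower estimate
    (ρ c₁ K' lam₀ : ℝ) (hρ : 1 < ρ) (hc₁ : 0 < c₁) (hK' : 0 < K')
    (hL : ∀ s ∈ Set.Icc t (2 * t), ∀ x y : EuclideanSpace ℝ (Fin d),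
      ρ < ‖x‖ → ρ < ‖y‖ →
      c₁ * Real.exp (lam₀ * s) * (f₁ ‖x‖ * f₁ ‖y‖)⁻¹ *
          (∫ z in {z : EuclideanSpace ℝ (Fin d) | ρ - 1 < ‖z‖ ∧ ‖z‖ < max ‖x‖ ‖y‖},
            f₁ ‖x - z‖ * f₁ ‖z - y‖ * Real.exp (-(K' * s * g ‖z‖))) ≤ q s x y) :
    ∃ C' > 0, ∃ κ' > 0, ∃ r₀ > ρ,
      (StrictAntiOn (fun r => f r ^ 2 * Real.exp (K' * t * g r)) (Set.Ici r₀) ∧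
        Tendsto (fun r => f r ^ 2 * Real.exp (K' * t * g r)) atTop (𝓝 0)) ∧
      ∀ u ≥ κ' / (f r₀ ^ 2 * Real.exp (K' * t * g r₀)), ∀ β ≥ r₀,
        f β ^ 2 * Real.exp (K' * t * g β) = κ' / u →
        ENNReal.ofReal ((1 / u) * (C' / (g β ^ 2 * Real.exp (K' * t * g β)))) ≤
          ⨆ (h : EuclideanSpace ℝ (Fin d) → ℝ) (_ : Measurable h ∧ (∀ y, 0 ≤ h y) ∧
              Integrable h μ ∧ (∫ y, h y ∂μ) = 1),
            μ {x : EuclideanSpace ℝ (Fin d) | u < ∫ y, q t x y * h y ∂μ} := by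
  classical
  haveI := hμ_prob
  haveI : Nonempty (Fin d) := ⟨⟨0, hd⟩⟩
  haveI : Nontrivial (EuclideanSpace ℝ (Fin d)) := inferInstance
  haveI := Module.punctured_nhds_neBot ℝ (EuclideanSpace ℝ (Fin d))
  obtain ⟨R, hRpos, hfR, haAnti, haLim⟩ := hD
  have hKt : 0 < K' * t := mul_pos hK' ht
  obtain ⟨R₁, hR₁⟩ : ∃ R₁ : ℝ, ∀ r ≥ R₁, g r / |Real.log (f r)| ≤ 1 / (2 * (K' * t)) := by
    have hev : ∀ᶠ r in atTop, g r / |Real.log (f r)| ≤ 1 / (2 * (K' * t)) :=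
      haLim.eventually (eventually_le_nhds (by positivity))
    rw [eventually_atTop] at hev
    exact hev
  set r₀ : ℝ := max (max R R₁) (max (ρ + 1) R₀) with hr₀def
  have hr₀R : R ≤ r₀ := le_max_of_le_left (le_max_left _ _)
  have hr₀R₁ : R₁ ≤ r₀ := le_max_of_le_left (le_max_right _ _)
  have hr₀ρ : ρ + 1 ≤ r₀ := le_max_of_le_right (le_max_left _ _)
  have hr₀R₀ : R₀ ≤ r₀ := le_max_of_le_right (le_max_right _ _)
  have hρ0 : (0:ℝ) < ρ := lt_trans one_pos hρ
  have hr₀pos : 0 < r₀ := by linarith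
  have hr₀gt : ρ < r₀ := by linarith
  have hfR' : ∀ r ≥ r₀, f r < 1 := fun r hr => hfR r (le_trans hr₀R hr)
  have haAnti' : AntitoneOn (fun r => g r / |Real.log (f r)|) (Set.Ici r₀) :=
    haAnti.mono (Set.Ici_subset_Ici.mpr hr₀R)
  have haSmall : ∀ r ≥ r₀, g r / |Real.log (f r)| ≤ 1 / (2 * (K' * t)) :=
    fun r hr => hR₁ r (le_trans hr₀R₁ hr)
  have hGanti := auxG_anti f g (K' * t) hKt hf_pos hf_anti hg_pos r₀ hr₀pos hfR' haAnti' haSmall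
  have hGtend := auxG_tendsto f g (K' * t) hKt hf_pos hf_lim hg_pos r₀ hr₀pos hfR' haSmall
  -- geometry
  set e₀ : EuclideanSpace ℝ (Fin d) := EuclideanSpace.single (⟨0, hd⟩ : Fin d) (1:ℝ) with he₀
  have he₀norm : ‖e₀‖ = 1 := by rw [he₀, EuclideanSpace.norm_single]; norm_num
  have hsmul : ∀ a : ℝ, 0 ≤ a → ‖a • e₀‖ = a := by
    intro a ha; rw [norm_smul, he₀norm, mul_one, Real.norm_eq_abs, abs_of_nonneg ha]
  have hVb_pos : 0 < volume (Metric.ball (0 : EuclideanSpace ℝ (Fin d)) 4⁻¹) :=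
    Metric.measure_ball_pos _ _ (by norm_num)
  have hVb_fin : volume (Metric.ball (0 : EuclideanSpace ℝ (Fin d)) 4⁻¹) < ⊤ :=
    measure_ball_lt_top
  set V : ℝ := (volume (Metric.ball (0 : EuclideanSpace ℝ (Fin d)) 4⁻¹)).toReal with hV
  have hVpos : 0 < V := ENNReal.toReal_pos hVb_pos.ne' hVb_fin.ne
  have hf₁2pos : 0 < f₁ 2 := by rw [hf₁]; exact lt_min (hf_pos 2 two_pos) one_pos
  have hE : 0 < Real.exp (lam₀ * t) := Real.exp_pos _
  set κ' : ℝ := c₁ * Real.exp (lam₀ * t) * f₁ 2 ^ 2 * V / 2 with hκ'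
  have hκ'pos : 0 < κ' :=
    div_pos (mul_pos (mul_pos (mul_pos hc₁ hE) (pow_pos hf₁2pos 2)) hVpos) two_pos
  have hC₁₀0 : (0:ℝ) < C₁₀ := lt_of_lt_of_le one_pos hC₁₀
  have hC₆0 : (0:ℝ) < C₆ := lt_of_lt_of_le one_pos hC₆
  have hC₇0 : (0:ℝ) < C₇ := lt_of_lt_of_le one_pos hC₇
  set C' : ℝ := κ' * ((C₁₀⁻¹ / (C₇ ^ 2 * C₆ ^ 2)) ^ 2 * V) with hC'
  have hC'pos : 0 < C' := by
    apply mul_pos hκ'pos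
    apply mul_pos _ hVpos
    apply pow_pos
    apply div_pos (inv_pos.mpr hC₁₀0) (mul_pos (pow_pos hC₇0 2) (pow_pos hC₆0 2))
  have hf₁le1 : ∀ r : ℝ, f₁ r ≤ 1 := fun r => by rw [hf₁]; exact min_le_right _ _
  have hf₁pos : ∀ r : ℝ, 0 < r → 0 < f₁ r := fun r hr => by
    rw [hf₁]; exact lt_min (hf_pos r hr) one_pos
  have hf₁mono : ∀ r s : ℝ, 0 < r → r ≤ s → f₁ s ≤ f₁ r := by
    intro r s hr hrs
    rw [hf₁, hf₁]
    exact min_le_min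
      (hf_anti.antitoneOn (Set.mem_Ioi.mpr hr) (Set.mem_Ioi.mpr (lt_of_lt_of_le hr hrs)) hrs)
      le_rfl
  refine ⟨C', hC'pos, κ', hκ'pos, r₀, hr₀gt, ⟨hGanti, hGtend⟩, ?_⟩
  intro u hu β hβ hGβ
  have hβpos : 0 < β := lt_of_lt_of_le hr₀pos hβ
  have hβρ : ρ + 1 ≤ β := le_trans hr₀ρ hβ
  have hβR₀ : R₀ ≤ β := le_trans hr₀R₀ hβ
  have hβR : R ≤ β := le_trans hr₀R hβ
  have hβ2 : 2 < β := by linarith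
  have hfβ : 0 < f β := hf_pos β hβpos
  have hgβ : 0 < g β := hg_pos β hβpos.le
  have heK : 0 < Real.exp (K' * t * g β) := Real.exp_pos _
  have hGr₀pos : 0 < f r₀ ^ 2 * Real.exp (K' * t * g r₀) := by
    have h1 := hf_pos r₀ hr₀pos
    have h2 := Real.exp_pos (K' * t * g r₀)
    positivity
  have hupos : 0 < u := lt_of_lt_of_le (div_pos hκ'pos hGr₀pos) hu
  have hrel : u * (f β ^ 2 * Real.exp (K' * t * g β)) = κ' := by
    rw [hGβ]; field_simp
  -- the balls
  set cB : EuclideanSpace ℝ (Fin d) := (β + 1) • e₀ with hcB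
  set cB' : EuclideanSpace ℝ (Fin d) := (β - 4⁻¹) • e₀ with hcB'
  set B := Metric.ball cB 4⁻¹ with hBdef
  set B' := Metric.ball cB' 4⁻¹ with hB'def
  have hcBnorm : ‖cB‖ = β + 1 := hsmul _ (by linarith)
  have hcB'norm : ‖cB'‖ = β - 4⁻¹ := hsmul _ (by norm_num; linarith)
  have hnormB : ∀ w ∈ B, β + 3/4 < ‖w‖ ∧ ‖w‖ < β + 5/4 := by
    intro w hw
    rw [hBdef, Metric.mem_ball, dist_eq_norm] at hw
    have h2 : |‖w‖ - ‖cB‖| ≤ ‖w - cB‖ := abs_norm_sub_norm_le _ _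
    rw [hcBnorm] at h2
    have h3 := lt_of_le_of_lt h2 hw
    rw [abs_lt] at h3
    constructor <;> [linarith [h3.1]; linarith [h3.2]]
  have hnormB' : ∀ z ∈ B', β - 2⁻¹ < ‖z‖ ∧ ‖z‖ < β := by
    intro z hz
    rw [hB'def, Metric.mem_ball, dist_eq_norm] at hz
    have h2 : |‖z‖ - ‖cB'‖| ≤ ‖z - cB'‖ := abs_norm_sub_norm_le _ _
    rw [hcB'norm] at h2
    have h3 := lt_of_le_of_lt h2 hz
    rw [abs_lt] at h3
    constructor <;> [linarith [h3.1]; linarith [h3.2]]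
  have hdist : ∀ x ∈ B, ∀ z ∈ B', 3/4 ≤ ‖x - z‖ ∧ ‖x - z‖ ≤ 2 := by
    intro x hx z hz
    have hx' := hnormB x hx
    have hz' := hnormB' z hz
    constructor
    · have h1 : ‖x‖ - ‖z‖ ≤ ‖x - z‖ := norm_sub_norm_le x z
      linarith [hx'.1, hz'.2]
    · have hxc : ‖x - cB‖ < 4⁻¹ := by
        rw [hBdef, Metric.mem_ball, dist_eq_norm] at hx; exact hx
      have hcz : ‖cB' - z‖ < 4⁻¹ := by
        rw [hB'def, Metric.mem_ball, dist_eq_norm] at hz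
        rw [norm_sub_rev]; exact hz
      have hcc : ‖cB - cB'‖ = 5/4 := by
        rw [hcB, hcB', ← sub_smul]
        have he1 : β + 1 - (β - 4⁻¹) = (5/4 : ℝ) := by ring
        rw [he1]
        exact hsmul _ (by norm_num)
      have h1 : ‖x - z‖ ≤ ‖x - cB‖ + ‖cB - cB'‖ + ‖cB' - z‖ := by
        have : x - z = (x - cB) + (cB - cB') + (cB' - z) := by abel
        rw [this]
        exact norm_add₃_le
      linarith
  -- kernel lower bound on B × B
  have hkernel : ∀ x ∈ B, ∀ y ∈ B, 2 * u ≤ q t x y := by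
    intro x hx y hy
    have hxn := hnormB x hx
    have hyn := hnormB y hy
    have hxρ : ρ < ‖x‖ := by linarith [hxn.1]
    have hyρ : ρ < ‖y‖ := by linarith [hyn.1]
    have hL' := hL t ⟨le_refl t, by linarith⟩ x y hxρ hyρ
    set M : ℝ := max ‖x‖ ‖y‖ with hM
    have hβM : β < M := lt_of_lt_of_le (by linarith [hxn.1] : β < ‖x‖) (le_max_left _ _)
    set S := {z : EuclideanSpace ℝ (Fin d) | ρ - 1 < ‖z‖ ∧ ‖z‖ < M} with hS
    set F := fun z : EuclideanSpace ℝ (Fin d) =>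
      f₁ ‖x - z‖ * f₁ ‖z - y‖ * Real.exp (-(K' * t * g ‖z‖)) with hF
    have hSfin : volume S ≠ ⊤ := by
      refine (lt_of_le_of_lt (measure_mono ?_) (measure_ball_lt_top (x := (0 : EuclideanSpace ℝ (Fin d))) (r := M))).ne
      intro z hz
      rw [Metric.mem_ball, dist_zero_right]
      exact hz.2
    set U := ({x} ∪ {y} : Set (EuclideanSpace ℝ (Fin d)))ᶜ with hU
    have hUmeas : MeasurableSet U :=
      ((measurableSet_singleton x).union (measurableSet_singleton y)).compl
    have hUmem : ∀ᵐ z : EuclideanSpace ℝ (Fin d), z ∈ U := by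
      rw [Filter.eventually_mem_set, hU]
      exact compl_mem_ae_iff.mpr
        (measure_union_null (measure_singleton x) (measure_singleton y))
    have hzU : ∀ z ∈ U, z ≠ x ∧ z ≠ y := by
      intro z hz
      simp only [hU, Set.mem_compl_iff, Set.mem_union, Set.mem_singleton_iff, not_or] at hz
      exact hz
    have hFnn : ∀ z ∈ U, 0 ≤ F z ∧ F z ≤ 1 := by
      intro z hz
      obtain ⟨hzx, hzy⟩ := hzU z hz
      have h1 : 0 < ‖x - z‖ := by
        rw [norm_pos_iff, sub_ne_zero]; exact fun hcon => hzx hcon.symm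
      have h2 : 0 < ‖z - y‖ := by
        rw [norm_pos_iff, sub_ne_zero]; exact hzy
      have e1 := hf₁pos _ h1
      have e2 := hf₁pos _ h2
      have e3 : Real.exp (-(K' * t * g ‖z‖)) ≤ 1 := by
        rw [Real.exp_le_one_iff]
        exact neg_nonpos.mpr (mul_nonneg (mul_nonneg hK'.le ht.le) (hg_pos ‖z‖ (norm_nonneg z)).le)
      have e4 : 0 < Real.exp (-(K' * t * g ‖z‖)) := Real.exp_pos _
      have e5 := hf₁le1 ‖x - z‖
      have e6 := hf₁le1 ‖z - y‖
      constructor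
      · rw [hF]; positivity
      · rw [hF]
        exact mul_le_one₀ (mul_le_one₀ e5 e2.le e6) e4.le e3
    have hFcont : ContinuousOn F U := by
      have hn1 : Continuous (fun z : EuclideanSpace ℝ (Fin d) => ‖x - z‖) :=
        (continuous_const.sub continuous_id).norm
      have hmap1 : Set.MapsTo (fun z : EuclideanSpace ℝ (Fin d) => ‖x - z‖) U (Set.Ioi 0) := by
        intro z hz
        obtain ⟨hzx, _⟩ := hzU z hz
        simp only [Set.mem_Ioi]
        rw [norm_pos_iff, sub_ne_zero]
        exact fun hcon => hzx hcon.symm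
      have hx1 : ContinuousOn (fun z : EuclideanSpace ℝ (Fin d) => f₁ ‖x - z‖) U := by
        simp only [hf₁]
        exact (hf_cont.comp hn1.continuousOn hmap1).inf continuousOn_const
      have hn2 : Continuous (fun z : EuclideanSpace ℝ (Fin d) => ‖z - y‖) :=
        (continuous_id.sub continuous_const).norm
      have hmap2 : Set.MapsTo (fun z : EuclideanSpace ℝ (Fin d) => ‖z - y‖) U (Set.Ioi 0) := by
        intro z hz
        obtain ⟨_, hzy⟩ := hzU z hz
        simp only [Set.mem_Ioi]
        rw [norm_pos_iff, sub_ne_zero]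
        exact hzy
      have hy1 : ContinuousOn (fun z : EuclideanSpace ℝ (Fin d) => f₁ ‖z - y‖) U := by
        simp only [hf₁]
        exact (hf_cont.comp hn2.continuousOn hmap2).inf continuousOn_const
      have hgn : Continuous (fun z : EuclideanSpace ℝ (Fin d) => g ‖z‖) := by
        rw [← continuousOn_univ]
        apply hg_cont.comp continuous_norm.continuousOn
        intro z _
        exact norm_nonneg z
      have hexp : Continuous (fun z : EuclideanSpace ℝ (Fin d) => Real.exp (-(K' * t * g ‖z‖))) :=
        Real.continuous_exp.comp (((continuous_const.mul hgn)).neg)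
      exact (hx1.mul hy1).mul hexp.continuousOn
    have hFaesm : AEStronglyMeasurable F volume := by
      have h1 : AEStronglyMeasurable F (volume.restrict U) := hFcont.aestronglyMeasurable hUmeas
      rwa [Measure.restrict_eq_self_of_ae_mem hUmem] at h1
    have hFint : IntegrableOn F S volume := by
      apply Measure.integrableOn_of_bounded (M := 1) hSfin hFaesm
      apply Filter.Eventually.filter_mono (ae_mono Measure.restrict_le_self)
      filter_upwards [hUmem] with z hz
      have hb := hFnn z hz
      rw [Real.norm_eq_abs, abs_le]
      exact ⟨by linarith [hb.1], hb.2⟩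
    have hB'S : B' ⊆ S := by
      intro z hz
      have hz' := hnormB' z hz
      exact ⟨by linarith [hz'.1], by linarith [hz'.2]⟩
    have hδpos : 0 < f₁ 2 ^ 2 * Real.exp (-(K' * t * g β)) := by positivity
    have hstep1 : f₁ 2 ^ 2 * Real.exp (-(K' * t * g β)) * V ≤ ∫ z in S, F z := by
      have hmono : (∫ z in B', F z) ≤ ∫ z in S, F z := by
        apply setIntegral_mono_set hFint
        · apply Filter.Eventually.filter_mono (ae_mono Measure.restrict_le_self)
          filter_upwards [hUmem] with z hz using (hFnn z hz).1
        · exact HasSubset.Subset.eventuallyLE hB'S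
      refine le_trans ?_ hmono
      have hVB' : (volume B').toReal = V := by
        rw [hB'def, Measure.addHaar_ball_center, hV]
      have hconst : f₁ 2 ^ 2 * Real.exp (-(K' * t * g β)) * (volume B').toReal
          ≤ ∫ z in B', F z := by
        apply setIntegral_ge_of_const_le_real Metric.isOpen_ball.measurableSet
          (measure_ball_lt_top).ne _ (hFint.mono_set hB'S)
        intro z hz
        have hz' := hnormB' z hz
        have hd1 := hdist x hx z hz
        have hd2 : 3/4 ≤ ‖z - y‖ ∧ ‖z - y‖ ≤ 2 := by
          rw [norm_sub_rev]; exact hdist y hy z hz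
        have hb1 : f₁ 2 ≤ f₁ ‖x - z‖ := hf₁mono _ _ (by linarith [hd1.1]) hd1.2
        have hb2 : f₁ 2 ≤ f₁ ‖z - y‖ := hf₁mono _ _ (by linarith [hd2.1]) hd2.2
        have hb3 : Real.exp (-(K' * t * g β)) ≤ Real.exp (-(K' * t * g ‖z‖)) := by
          apply Real.exp_le_exp.mpr
          have hgz : g ‖z‖ ≤ g β :=
            hg_mono.monotoneOn (Set.mem_Ici.mpr (norm_nonneg z))
              (Set.mem_Ici.mpr hβpos.le) hz'.2.le
          exact neg_le_neg (mul_le_mul_of_nonneg_left hgz (mul_nonneg hK'.le ht.le))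
        have hp1 : 0 < f₁ ‖x - z‖ := hf₁pos _ (by linarith [hd1.1])
        have hp2 : 0 < f₁ ‖z - y‖ := hf₁pos _ (by linarith [hd2.1])
        have hep : (0:ℝ) ≤ Real.exp (-(K' * t * g β)) := (Real.exp_pos _).le
        show f₁ 2 ^ 2 * Real.exp (-(K' * t * g β)) ≤
          f₁ ‖x - z‖ * f₁ ‖z - y‖ * Real.exp (-(K' * t * g ‖z‖))
        calc f₁ 2 ^ 2 * Real.exp (-(K' * t * g β))
            = f₁ 2 * f₁ 2 * Real.exp (-(K' * t * g β)) := by ring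
          _ ≤ f₁ ‖x - z‖ * f₁ ‖z - y‖ * Real.exp (-(K' * t * g ‖z‖)) := by
              apply mul_le_mul _ hb3 hep
                (mul_nonneg hp1.le hp2.le)
              exact mul_le_mul hb1 hb2 hf₁2pos.le hp1.le
      rw [hVB'] at hconst
      exact hconst
    have hf₁xβ : f₁ ‖x‖ ≤ f β := by
      refine le_trans (hf₁mono β ‖x‖ hβpos (by linarith [hxn.1])) ?_
      rw [hf₁]; exact min_le_left _ _
    have hf₁yβ : f₁ ‖y‖ ≤ f β := by
      refine le_trans (hf₁mono β ‖y‖ hβpos (by linarith [hyn.1])) ?_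
      rw [hf₁]; exact min_le_left _ _
    have hf₁xpos : 0 < f₁ ‖x‖ := hf₁pos _ (by linarith [hxn.1])
    have hf₁ypos : 0 < f₁ ‖y‖ := hf₁pos _ (by linarith [hyn.1])
    have hinv : (f β * f β)⁻¹ ≤ (f₁ ‖x‖ * f₁ ‖y‖)⁻¹ := by
      apply inv_anti₀ (mul_pos hf₁xpos hf₁ypos)
      exact mul_le_mul hf₁xβ hf₁yβ hf₁ypos.le hfβ.le
    have halg : c₁ * Real.exp (lam₀ * t) * (f β * f β)⁻¹ *
        (f₁ 2 ^ 2 * Real.exp (-(K' * t * g β)) * V) = 2 * u := by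
      have hexpinv : Real.exp (-(K' * t * g β)) = (Real.exp (K' * t * g β))⁻¹ :=
        Real.exp_neg _
      have h2κ : c₁ * Real.exp (lam₀ * t) * f₁ 2 ^ 2 * V = 2 * κ' := by rw [hκ']; ring
      have hX : (0:ℝ) < f β ^ 2 * Real.exp (K' * t * g β) := by positivity
      rw [hexpinv]
      calc c₁ * Real.exp (lam₀ * t) * (f β * f β)⁻¹ *
          (f₁ 2 ^ 2 * (Real.exp (K' * t * g β))⁻¹ * V)
          = (c₁ * Real.exp (lam₀ * t) * f₁ 2 ^ 2 * V) *
            (f β ^ 2 * Real.exp (K' * t * g β))⁻¹ := by ring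
        _ = (2 * κ') * (f β ^ 2 * Real.exp (K' * t * g β))⁻¹ := by rw [h2κ]
        _ = (2 * (u * (f β ^ 2 * Real.exp (K' * t * g β)))) *
            (f β ^ 2 * Real.exp (K' * t * g β))⁻¹ := by rw [hrel]
        _ = 2 * u * ((f β ^ 2 * Real.exp (K' * t * g β)) *
            (f β ^ 2 * Real.exp (K' * t * g β))⁻¹) := by ring
        _ = 2 * u := by rw [mul_inv_cancel₀ hX.ne', mul_one]
    have hchain : 2 * u ≤ c₁ * Real.exp (lam₀ * t) * (f₁ ‖x‖ * f₁ ‖y‖)⁻¹ * ∫ z in S, F z := by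
      rw [← halg]
      apply mul_le_mul (mul_le_mul_of_nonneg_left hinv (by positivity)) hstep1
        (by positivity) ?_
      have : (0:ℝ) < f₁ ‖x‖ * f₁ ‖y‖ := mul_pos hf₁xpos hf₁ypos
      positivity
    exact le_trans hchain hL'
  -- lower bound for μ B
  have hm_pos : 0 < C₁₀⁻¹ * (f β / C₇ ^ 2 / (C₆ ^ 2 * g β)) := by positivity
  have hmB_low : ENNReal.ofReal ((C₁₀⁻¹ * (f β / C₇ ^ 2 / (C₆ ^ 2 * g β))) ^ 2) *
      volume (Metric.ball (0 : EuclideanSpace ℝ (Fin d)) 4⁻¹) ≤ μ B := by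
    have hμB : μ B = ∫⁻ x in B, ENNReal.ofReal (φ₀ x ^ 2) ∂volume := by
      rw [hμ, withDensity_apply _ Metric.isOpen_ball.measurableSet]
    have hpt : ∀ x ∈ B, C₁₀⁻¹ * (f β / C₇ ^ 2 / (C₆ ^ 2 * g β)) ≤ φ₀ x := by
      intro x hx
      have hxn := hnormB x hx
      have hxpos : 0 < ‖x‖ := by linarith [hxn.1]
      have h1 := (hφ₀ x).1
      have hfcomp : f β ≤ C₇ ^ 2 * f (β + 2) := by
        have h2 := hf_comp β hβR₀
        have h3 := hf_comp (β + 1) (by linarith)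
        have he2 : β + 1 + 1 = β + 2 := by ring
        rw [he2] at h3
        calc f β ≤ C₇ * f (β + 1) := h2
          _ ≤ C₇ * (C₇ * f (β + 2)) := mul_le_mul_of_nonneg_left h3 hC₇0.le
          _ = C₇ ^ 2 * f (β + 2) := by ring
      have hfle : f (β + 2) ≤ f ‖x‖ :=
        hf_anti.antitoneOn (Set.mem_Ioi.mpr hxpos) (Set.mem_Ioi.mpr (by linarith))
          (by linarith [hxn.2])
      have hflt1 : f (β + 2) < 1 := hfR (β + 2) (by linarith)
      have hfq : f β / C₇ ^ 2 ≤ f (β + 2) := by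
        rw [div_le_iff₀ (by positivity)]
        linarith [hfcomp]
      have hf₁x_low : f β / C₇ ^ 2 ≤ f₁ ‖x‖ := by
        rw [hf₁]
        exact le_min (le_trans hfq hfle) (by linarith)
      have hgx : g ‖x‖ ≤ C₆ ^ 2 * g β := by
        have h2 := hg_comp β hβR₀
        have h3 := hg_comp (β + 1) (by linarith)
        have he2 : β + 1 + 1 = β + 2 := by ring
        rw [he2] at h3
        have hmono : g ‖x‖ ≤ g (β + 2) :=
          hg_mono.monotoneOn (Set.mem_Ici.mpr (norm_nonneg x))
            (Set.mem_Ici.mpr (by linarith)) (by linarith [hxn.2])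
        calc g ‖x‖ ≤ g (β + 2) := hmono
          _ ≤ C₆ * g (β + 1) := h3
          _ ≤ C₆ * (C₆ * g β) := mul_le_mul_of_nonneg_left h2 hC₆0.le
          _ = C₆ ^ 2 * g β := by ring
      have hgxpos : 0 < g ‖x‖ := hg_pos _ (norm_nonneg x)
      refine le_trans ?_ h1
      apply mul_le_mul_of_nonneg_left _ (inv_nonneg.mpr hC₁₀0.le)
      exact div_le_div₀ (le_of_lt (hf₁pos _ hxpos)) hf₁x_low hgxpos hgx
    calc ENNReal.ofReal ((C₁₀⁻¹ * (f β / C₇ ^ 2 / (C₆ ^ 2 * g β))) ^ 2) *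
          volume (Metric.ball (0 : EuclideanSpace ℝ (Fin d)) 4⁻¹)
        = ENNReal.ofReal ((C₁₀⁻¹ * (f β / C₇ ^ 2 / (C₆ ^ 2 * g β))) ^ 2) * volume B := by
          rw [hBdef,
            show volume (Metric.ball cB 4⁻¹) =
                volume (Metric.ball (0 : EuclideanSpace ℝ (Fin d)) 4⁻¹) from
              Measure.addHaar_ball_center _ _ _]
      _ = ∫⁻ _ in B, ENNReal.ofReal ((C₁₀⁻¹ * (f β / C₇ ^ 2 / (C₆ ^ 2 * g β))) ^ 2) ∂volume :=
          (setLIntegral_const _ _).symm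
      _ ≤ ∫⁻ x in B, ENNReal.ofReal (φ₀ x ^ 2) ∂volume := by
          apply setLIntegral_mono ((hφ₀_meas.pow_const 2).ennreal_ofReal)
          intro x hx
          apply ENNReal.ofReal_le_ofReal
          exact pow_le_pow_left₀ hm_pos.le (hpt x hx) 2
      _ = μ B := hμB.symm
  have hmB_pos : 0 < μ B :=
    lt_of_lt_of_le (ENNReal.mul_pos (ENNReal.ofReal_pos.mpr (by positivity)).ne' hVb_pos.ne') hmB_low
  have hmBfin : μ B ≠ ⊤ := measure_ne_top μ B
  have hmBtr : 0 < (μ B).toReal := ENNReal.toReal_pos hmB_pos.ne' hmBfin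
  -- the density h
  set hfun : EuclideanSpace ℝ (Fin d) → ℝ := B.indicator (fun _ => (μ B).toReal⁻¹) with hhdef
  have hmeas : Measurable hfun := measurable_const.indicator Metric.isOpen_ball.measurableSet
  have hnn : ∀ y, 0 ≤ hfun y := fun y =>
    Set.indicator_nonneg (fun _ _ => inv_nonneg.mpr ENNReal.toReal_nonneg) y
  have hint : Integrable hfun μ := by
    rw [hhdef]
    exact (integrable_const ((μ B).toReal⁻¹)).indicator Metric.isOpen_ball.measurableSet
  have hint1 : (∫ y, hfun y ∂μ) = 1 := by
    rw [hhdef, integral_indicator_const _ Metric.isOpen_ball.measurableSet, smul_eq_mul]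
    exact mul_inv_cancel₀ hmBtr.ne'
  have hqint : ∀ x : EuclideanSpace ℝ (Fin d), Integrable (fun y => q t x y) μ := by
    intro x
    by_contra hcon
    have h0 := integral_undef hcon
    have h1 := hq_mass t ht x
    rw [h0] at h1
    exact zero_ne_one h1
  have hQrw : ∀ x : EuclideanSpace ℝ (Fin d),
      (∫ y, q t x y * hfun y ∂μ) = (μ B).toReal⁻¹ * ∫ y in B, q t x y ∂μ := by
    intro x
    have hrw : (fun y => q t x y * hfun y) =
        B.indicator (fun y => (μ B).toReal⁻¹ * q t x y) := by
      funext y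
      rw [hhdef]
      by_cases hy : y ∈ B
      · rw [Set.indicator_of_mem hy, Set.indicator_of_mem hy]; ring
      · rw [Set.indicator_of_notMem hy, Set.indicator_of_notMem hy]; ring
    rw [hrw, integral_indicator Metric.isOpen_ball.measurableSet, integral_const_mul]
  have hsub : B ⊆ {x : EuclideanSpace ℝ (Fin d) | u < ∫ y, q t x y * hfun y ∂μ} := by
    intro x hx
    have hset := setIntegral_ge_of_const_le_real Metric.isOpen_ball.measurableSet hmBfin
      (fun y hy => hkernel x hx y hy) (hqint x).integrableOn
    have h2 : (μ B).toReal⁻¹ * (2 * u * (μ B).toReal) ≤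
        (μ B).toReal⁻¹ * ∫ y in B, q t x y ∂μ :=
      mul_le_mul_of_nonneg_left hset (inv_nonneg.mpr ENNReal.toReal_nonneg)
    have h3 : (μ B).toReal⁻¹ * (2 * u * (μ B).toReal) = 2 * u := by
      field_simp
    rw [Set.mem_setOf_eq, hQrw x]
    linarith
  have hval : 1 / u * (C' / (g β ^ 2 * Real.exp (K' * t * g β))) =
      (C₁₀⁻¹ * (f β / C₇ ^ 2 / (C₆ ^ 2 * g β))) ^ 2 * V := by
    have h1u : 1 / u = f β ^ 2 * Real.exp (K' * t * g β) / κ' := by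
      rw [← hrel]
      field_simp
    rw [h1u, hC']
    field_simp
  calc ENNReal.ofReal (1 / u * (C' / (g β ^ 2 * Real.exp (K' * t * g β))))
      = ENNReal.ofReal ((C₁₀⁻¹ * (f β / C₇ ^ 2 / (C₆ ^ 2 * g β))) ^ 2 * V) := by rw [hval]
    _ = ENNReal.ofReal ((C₁₀⁻¹ * (f β / C₇ ^ 2 / (C₆ ^ 2 * g β))) ^ 2) *
        volume (Metric.ball (0 : EuclideanSpace ℝ (Fin d)) 4⁻¹) := by
        rw [ENNReal.ofReal_mul (by positivity), hV, ENNReal.ofReal_toReal hVb_fin.ne]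
    _ ≤ μ B := hmB_low
    _ ≤ μ {x : EuclideanSpace ℝ (Fin d) | u < ∫ y, q t x y * hfun y ∂μ} := measure_mono hsub
    _ ≤ ⨆ (h : EuclideanSpace ℝ (Fin d) → ℝ) (_ : Measurable h ∧ (∀ y, 0 ≤ h y) ∧
          Integrable h μ ∧ (∫ y, h y ∂μ) = 1),
          μ {x : EuclideanSpace ℝ (Fin d) | u < ∫ y, q t x y * h y ∂μ} :=
        le_iSup₂_of_le hfun ⟨hmeas, hnn, hint, hint1⟩ le_rfl
end
end

section
/- For all a, b, t > 0 there exists r₀ > 0 such that the function r ↦ f₁(r)^a e^{b t g(r)} is strictly decreasing on [r₀, ∞) and tends to 0 as r → ∞. -/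
open Filter Topology Set

/-- For all `a, b, t > 0` there exists `r₀ > 0` such that the function
`r ↦ f₁(r)^a * exp(b t g(r))` is strictly decreasing on `[r₀, ∞)` and tends to `0` at `∞`. -/
theorem stmt7
    (f g : ℝ → ℝ)
    (hf_pos : ∀ r > 0, 0 < f r)
    (hf_anti : StrictAntiOn f (Set.Ioi 0))
    (hf_cont : ContinuousOn f (Set.Ioi 0))
    (hf_lim : Tendsto f atTop (𝓝 0))
    (f₁ : ℝ → ℝ) (hf₁ : ∀ r, f₁ r = min (f r) 1)
    (hg_pos : ∀ r ≥ 0, 0 < g r)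
    (hg_mono : StrictMonoOn g (Set.Ici 0))
    (hg_cont : ContinuousOn g (Set.Ici 0))
    (hg_lim : Tendsto g atTop atTop)
    -- Condition (D)
    (hD : ∃ R > 0, (∀ r ≥ R, f r < 1) ∧
      AntitoneOn (fun r => g r / |Real.log (f r)|) (Set.Ici R) ∧
      Tendsto (fun r => g r / |Real.log (f r)|) atTop (𝓝 0)) :
    ∀ a > 0, ∀ b > 0, ∀ t > 0, ∃ r₀ > 0,
      StrictAntiOn (fun r => f₁ r ^ a * Real.exp (b * t * g r)) (Set.Ici r₀) ∧
      Tendsto (fun r => f₁ r ^ a * Real.exp (b * t * g r)) atTop (𝓝 0) := by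
  obtain ⟨R, hR, hfR, hanti, htend⟩ := hD
  intro a ha b hb t ht
  have hbt : 0 < b * t := mul_pos hb ht
  have haR : (0:ℝ) < (a:ℝ) := by exact_mod_cast ha
  -- eventual smallness of Q
  have hsm : ∀ᶠ r in atTop, g r / |Real.log (f r)| ≤ a / (2 * (b * t)) :=
    htend.eventually (eventually_le_nhds (div_pos haR (by positivity)))
  obtain ⟨N, hN⟩ := eventually_atTop.1 hsm
  set r₀ : ℝ := max R N with hr₀def
  have hr₀R : R ≤ r₀ := le_max_left _ _
  have hr₀pos : 0 < r₀ := lt_of_lt_of_le hR hr₀R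
  -- basic facts for r ≥ R
  have hfpos : ∀ r, R ≤ r → 0 < f r := fun r hr => hf_pos r (lt_of_lt_of_le hR hr)
  have hlogneg : ∀ r, R ≤ r → Real.log (f r) < 0 := fun r hr =>
    Real.log_neg (hfpos r hr) (hfR r hr)
  have habs : ∀ r, R ≤ r → |Real.log (f r)| = -Real.log (f r) := fun r hr =>
    abs_of_neg (hlogneg r hr)
  have habspos : ∀ r, R ≤ r → 0 < |Real.log (f r)| := fun r hr =>
    abs_pos.2 (ne_of_lt (hlogneg r hr))
  -- S r = log (f r) * a + b * t * g r
  set S : ℝ → ℝ := fun r => Real.log (f r) * a + b * t * g r with hS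
  -- key identity: S r = |log f r| * (Q r - a)
  have hkey : ∀ r, R ≤ r →
      S r = |Real.log (f r)| * (b * t * (g r / |Real.log (f r)|) - a) := by
    intro r hr
    have hne : Real.log (f r) ≠ 0 := ne_of_lt (hlogneg r hr)
    rw [habs r hr, mul_sub]
    have h2 : -Real.log (f r) * (b * t * (g r / -Real.log (f r))) = b * t * g r := by
      field_simp
    rw [h2]; ring
  -- Q is small on [r₀, ∞)
  have hQ : ∀ r, r₀ ≤ r → b * t * (g r / |Real.log (f r)|) ≤ a / 2 := by
    intro r hr
    have h1 : g r / |Real.log (f r)| ≤ a / (2 * (b * t)) := hN r (le_trans (le_max_right _ _) hr)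
    calc b * t * (g r / |Real.log (f r)|) ≤ b * t * (a / (2 * (b * t))) :=
          mul_le_mul_of_nonneg_left h1 (le_of_lt hbt)
      _ = a / 2 := by field_simp
  -- |log f| strictly increasing on [R,∞)
  have hL : ∀ x y, R ≤ x → x < y → |Real.log (f x)| < |Real.log (f y)| := by
    intro x y hx hxy
    have hxp : (0:ℝ) < x := lt_of_lt_of_le hR hx
    have hfy : f y < f x := hf_anti (mem_Ioi.2 hxp) (mem_Ioi.2 (lt_trans hxp hxy)) hxy
    have : Real.log (f y) < Real.log (f x) :=
      Real.log_lt_log (hf_pos y (lt_trans hxp hxy)) hfy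
    rw [habs x hx, habs y (le_trans hx (le_of_lt hxy))]
    linarith
  -- strict antitonicity of S on [r₀, ∞)
  have hSanti : ∀ x ∈ Set.Ici r₀, ∀ y ∈ Set.Ici r₀, x < y → S y < S x := by
    intro x hx y hy hxy
    have hxR : R ≤ x := le_trans hr₀R hx
    have hyR : R ≤ y := le_trans hr₀R hy
    rw [hkey x hxR, hkey y hyR]
    have hQyx : b * t * (g y / |Real.log (f y)|) ≤ b * t * (g x / |Real.log (f x)|) :=
      mul_le_mul_of_nonneg_left (hanti (mem_Ici.2 hxR) (mem_Ici.2 hyR) (le_of_lt hxy))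
        (le_of_lt hbt)
    have hQx : b * t * (g x / |Real.log (f x)|) - a ≤ -(a/2) := by
      have := hQ x hx; linarith
    calc |Real.log (f y)| * (b * t * (g y / |Real.log (f y)|) - a)
        ≤ |Real.log (f y)| * (b * t * (g x / |Real.log (f x)|) - a) :=
          mul_le_mul_of_nonneg_left (by linarith) (abs_nonneg _)
      _ < |Real.log (f x)| * (b * t * (g x / |Real.log (f x)|) - a) := by
          apply mul_lt_mul_of_neg_right (hL x y hxR hxy)
          linarith [haR]
  -- log (f r) → -∞
  have hflim' : Tendsto f atTop (𝓝[>] (0:ℝ)) := by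
    rw [tendsto_nhdsWithin_iff]
    refine ⟨hf_lim, ?_⟩
    filter_upwards [eventually_ge_atTop (1:ℝ)] with r hr
    exact mem_Ioi.2 (hf_pos r (by linarith))
  have hlogbot : Tendsto (fun r => Real.log (f r)) atTop atBot :=
    Real.tendsto_log_nhdsGT_zero.comp hflim'
  have habstop : Tendsto (fun r => |Real.log (f r)|) atTop atTop := by
    have h1 : Tendsto (fun r => -Real.log (f r)) atTop atTop :=
      tendsto_neg_atBot_atTop.comp hlogbot
    refine h1.congr' ?_
    filter_upwards [eventually_ge_atTop R] with r hr
    exact (habs r hr).symm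
  -- S → -∞
  have hSbot : Tendsto S atTop atBot := by
    have hbnd : Tendsto (fun r => |Real.log (f r)| * (-(a/2))) atTop atBot := by
      have h1 : Tendsto (fun r => (a/2) * |Real.log (f r)|) atTop atTop :=
        habstop.const_mul_atTop (by positivity)
      have h2 := tendsto_neg_atTop_atBot.comp h1
      refine h2.congr (fun r => ?_)
      simp only [Function.comp]; ring
    refine tendsto_atBot_mono' atTop ?_ hbnd
    filter_upwards [eventually_ge_atTop r₀] with r hr
    rw [hkey r (le_trans hr₀R hr)]
    have := hQ r hr
    exact mul_le_mul_of_nonneg_left (by linarith) (abs_nonneg _)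
  -- F r = exp (S r) for r ≥ r₀ (indeed r ≥ R)
  have hFeq : ∀ r, R ≤ r → f₁ r ^ a * Real.exp (b * t * g r) = Real.exp (S r) := by
    intro r hr
    have h1 : f₁ r = f r := by rw [hf₁ r]; exact min_eq_left (le_of_lt (hfR r hr))
    have hpow : f r ^ a = Real.exp (Real.log (f r) * a) := by
      have h2 := Real.exp_log (pow_pos (hfpos r hr) a)
      rw [Real.log_pow] at h2
      rw [← h2, mul_comm]
    rw [h1, hpow, ← Real.exp_add]
  refine ⟨r₀, hr₀pos, ?_, ?_⟩
  · intro x hx y hy hxy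
    simp only
    rw [hFeq x (le_trans hr₀R hx), hFeq y (le_trans hr₀R hy)]
    exact Real.exp_lt_exp.2 (hSanti x hx y hy hxy)
  · have h1 : Tendsto (fun r => Real.exp (S r)) atTop (𝓝 0) :=
      Real.tendsto_exp_atBot.comp hSbot
    refine h1.congr' ?_
    filter_upwards [eventually_ge_atTop R] with r hr
    exact (hFeq r hr).symm
end

section
/- For every δ > 0, lim_{u→∞} g(α(u))² e^{K t g(α(u))} / u^δ = 0 and lim_{u→∞} g(β(u))² e^{K̃ t g(β(u))} / u^δ = 0. -/
open Filter Topology Set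

lemma auxKey (c δ : ℝ) (hc : 0 < c) (hδ : 0 < δ) (h : ℝ → ℝ)
    (h0 : ∀ᶠ u : ℝ in atTop, 0 ≤ h u)
    (hs : ∀ ε > 0, ∀ᶠ u : ℝ in atTop, h u ≤ ε * Real.log u) :
    Tendsto (fun u => h u ^ 2 * Real.exp (c * h u) / u ^ δ) atTop (𝓝 0) := by
  have hε : (0:ℝ) < δ / (2 * (2 + c)) := by positivity
  have hub := hs _ hε
  have hlim : Tendsto (fun u : ℝ => u ^ (-(δ/2))) atTop (𝓝 0) :=
    tendsto_rpow_neg_atTop (by positivity)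
  refine tendsto_of_tendsto_of_tendsto_of_le_of_le' tendsto_const_nhds hlim ?_ ?_
  · filter_upwards [h0, eventually_ge_atTop (1:ℝ)] with u h0u hu1
    have hu0 : (0:ℝ) < u := lt_of_lt_of_le one_pos hu1
    have : (0:ℝ) < u ^ δ := Real.rpow_pos_of_pos hu0 _
    positivity
  · filter_upwards [h0, hub, eventually_ge_atTop (1:ℝ)] with u h0u hbu hu1
    have hu0 : (0:ℝ) < u := lt_of_lt_of_le one_pos hu1
    have hlog : 0 ≤ Real.log u := Real.log_nonneg hu1
    have hxe : h u ≤ Real.exp (h u) := le_trans (by linarith) (Real.add_one_le_exp _)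
    have h1 : h u ^ 2 * Real.exp (c * h u) ≤ Real.exp ((2 + c) * h u) := by
      have h2 : h u ^ 2 ≤ Real.exp (h u) ^ 2 := pow_le_pow_left₀ h0u hxe 2
      have h3 : Real.exp (h u) ^ 2 = Real.exp (2 * h u) := by
        rw [← Real.exp_nat_mul]; norm_num
      calc h u ^ 2 * Real.exp (c * h u) ≤ Real.exp (2 * h u) * Real.exp (c * h u) := by
              rw [← h3]; exact mul_le_mul_of_nonneg_right h2 (Real.exp_pos _).le
        _ = Real.exp ((2 + c) * h u) := by rw [← Real.exp_add]; ring_nf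
    have h4 : (2 + c) * h u ≤ (δ/2) * Real.log u := by
      have := mul_le_mul_of_nonneg_left hbu (by positivity : (0:ℝ) ≤ 2 + c)
      calc (2 + c) * h u ≤ (2 + c) * (δ / (2 * (2 + c)) * Real.log u) := this
        _ = (δ/2) * Real.log u := by field_simp
    have h5 : Real.exp ((2 + c) * h u) ≤ u ^ (δ/2) := by
      rw [Real.rpow_def_of_pos hu0]
      exact Real.exp_le_exp.2 (by linarith [h4])
    have hud : (0:ℝ) < u ^ δ := Real.rpow_pos_of_pos hu0 _
    calc h u ^ 2 * Real.exp (c * h u) / u ^ δ ≤ u ^ (δ/2) / u ^ δ := by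
          exact div_le_div₀ (by positivity) (h1.trans h5) hud le_rfl
      _ = u ^ (-(δ/2)) := by
          rw [← Real.rpow_sub hu0]; ring_nf


/-- For every `δ > 0`, `g(α(u))² e^{K t g(α(u))} / u^δ → 0` and
`g(β(u))² e^{K' t g(β(u))} / u^δ → 0` as `u → ∞`. -/
theorem stmt10
    (f finv : ℝ → ℝ)
    (hf_pos : ∀ r > 0, 0 < f r)
    (hf_anti : StrictAntiOn f (Set.Ioi 0))
    (hf_cont : ContinuousOn f (Set.Ioi 0))
    (hf_bij : Set.BijOn f (Set.Ioi 0) (Set.Ioi 0))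
    (hf_inv : Set.InvOn finv f (Set.Ioi 0) (Set.Ioi 0))
    (g : ℝ → ℝ)
    (hg_pos : ∀ r ≥ 0, 0 < g r)
    (hg_mono : StrictMonoOn g (Set.Ici 0))
    (hg_cont : ContinuousOn g (Set.Ici 0))
    (hg_lim : Tendsto g atTop atTop)
    -- Condition (D)
    (hD : ∃ R > 0, (∀ r ≥ R, f r < 1) ∧
      AntitoneOn (fun r => g r / |Real.log (f r)|) (Set.Ici R) ∧
      Tendsto (fun r => g r / |Real.log (f r)|) atTop (𝓝 0))
    (K K' t κ κ' : ℝ) (hK : 0 < K) (hK' : 0 < K') (ht : 0 < t) (hκ : 0 < κ) (hκ' : 0 < κ')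
    (α : ℝ → ℝ) (hα : ∀ u > 0, α u = finv ((κ / u) ^ ((1:ℝ) / 2)))
    (G : ℝ → ℝ) (hG : ∀ r, G r = f r ^ 2 * Real.exp (K' * t * g r))
    (u₀ : ℝ) (β : ℝ → ℝ)
    (hβ : ∀ u ≥ u₀, G (β u) = κ' / u)
    (hβ_lim : Tendsto β atTop atTop) :
    ∀ δ > 0,
      Tendsto (fun u => g (α u) ^ 2 * Real.exp (K * t * g (α u)) / u ^ δ) atTop (𝓝 0) ∧
      Tendsto (fun u => g (β u) ^ 2 * Real.exp (K' * t * g (β u)) / u ^ δ) atTop (𝓝 0) := by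
  obtain ⟨R, hR0, hfR, _hanti, hDlim⟩ := hD
  -- finv maps (0,∞) into (0,∞) and is a right inverse there
  have hfinv_mem : ∀ y ∈ Set.Ioi (0:ℝ), finv y ∈ Set.Ioi (0:ℝ) ∧ f (finv y) = y := by
    intro y hy
    obtain ⟨x, hx, hfx⟩ := hf_bij.surjOn hy
    have hx' : finv y = x := by rw [← hfx]; exact hf_inv.1 hx
    exact ⟨hx' ▸ hx, hf_inv.2 hy⟩
  -- s u := (κ/u)^(1/2) tends to 0 and is positive
  have hs_pos : ∀ u : ℝ, 0 < u → (0:ℝ) < (κ / u) ^ ((1:ℝ)/2) := fun u hu =>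
    Real.rpow_pos_of_pos (by positivity) _
  have hs_tendsto : Tendsto (fun u : ℝ => (κ / u) ^ ((1:ℝ)/2)) atTop (𝓝 0) := by
    have h1 : Tendsto (fun u : ℝ => κ / u) atTop (𝓝 0) :=
      Tendsto.div_atTop tendsto_const_nhds tendsto_id
    have h2 : ContinuousAt (fun x : ℝ => x ^ ((1:ℝ)/2)) 0 :=
      Real.continuousAt_rpow_const 0 _ (Or.inr (by norm_num))
    have := h2.tendsto.comp h1
    rwa [Real.zero_rpow (by norm_num : (1:ℝ)/2 ≠ 0)] at this
  -- α tends to atTop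
  have hα_top : Tendsto α atTop atTop := by
    rw [tendsto_atTop]
    intro b
    set M := max b 1 with hM
    have hM0 : (0:ℝ) < M := lt_of_lt_of_le one_pos (le_max_right _ _)
    have hfM : 0 < f M := hf_pos M hM0
    filter_upwards [hs_tendsto.eventually_lt_const hfM, eventually_gt_atTop (0:ℝ)]
      with u h1 h2
    have hsu : (κ / u) ^ ((1:ℝ)/2) ∈ Set.Ioi (0:ℝ) := hs_pos u h2
    obtain ⟨hmem, hfsu⟩ := hfinv_mem _ hsu
    rw [hα u h2]
    by_contra hcon
    push_neg at hcon
    have hlt : finv ((κ / u) ^ ((1:ℝ)/2)) < M :=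
      lt_of_lt_of_le hcon (le_max_left _ _)
    have := hf_anti hmem (Set.mem_Ioi.2 hM0) hlt
    rw [hfsu] at this
    exact absurd h1 (not_lt.2 this.le)
  -- the ε-log bound for α
  have hαbound : ∀ ε > 0, ∀ᶠ u : ℝ in atTop, g (α u) ≤ ε * Real.log u := by
    intro ε hε
    have hcomp : Tendsto (fun u => g (α u) / |Real.log (f (α u))|) atTop (𝓝 0) :=
      hDlim.comp hα_top
    filter_upwards [hcomp.eventually_lt_const hε, hα_top.eventually_ge_atTop R,
      eventually_gt_atTop (0:ℝ),
      Real.tendsto_log_atTop.eventually_ge_atTop (|Real.log κ|)] with u h1 h2 h3 h4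
    have hα0 : 0 < α u := lt_of_lt_of_le hR0 h2
    have hfα : f (α u) = (κ / u) ^ ((1:ℝ)/2) := by
      rw [hα u h3]; exact (hfinv_mem _ (hs_pos u h3)).2
    have hκu : (0:ℝ) < κ / u := by positivity
    have hlogval : Real.log (f (α u)) = (1/2) * (Real.log κ - Real.log u) := by
      rw [hfα, Real.log_rpow hκu, Real.log_div (ne_of_gt hκ) (ne_of_gt h3)]
    have hlogκ : Real.log κ ≤ |Real.log κ| := le_abs_self _
    have hlogneg : Real.log (f (α u)) ≤ 0 := by rw [hlogval]; nlinarith [abs_nonneg (Real.log κ)]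
    have habs : |Real.log (f (α u))| = (1/2) * (Real.log u - Real.log κ) := by
      rw [abs_of_nonpos hlogneg, hlogval]; ring
    have hLpos : 0 < |Real.log (f (α u))| := by
      have : f (α u) < 1 := hfR _ h2
      have hfpos : 0 < f (α u) := hf_pos _ hα0
      have := Real.log_neg hfpos this
      rw [abs_of_nonpos hlogneg]; linarith
    have hg1 : g (α u) < ε * |Real.log (f (α u))| := (div_lt_iff₀ hLpos).1 h1
    have hLle : |Real.log (f (α u))| ≤ Real.log u := by
      rw [habs]
      nlinarith [neg_abs_le (Real.log κ)]
    nlinarith [mul_le_mul_of_nonneg_left hLle hε.le]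
  -- the ε-log bound for β
  have hβbound : ∀ ε > 0, ∀ᶠ u : ℝ in atTop, g (β u) ≤ ε * Real.log u := by
    intro ε hε
    set ε₁ := min (ε/2) (1/(K'*t)) with hε₁def
    have hε₁ : 0 < ε₁ := lt_min (by positivity) (by positivity)
    have hcomp : Tendsto (fun u => g (β u) / |Real.log (f (β u))|) atTop (𝓝 0) :=
      hDlim.comp hβ_lim
    filter_upwards [hcomp.eventually_lt_const hε₁,
      hβ_lim.eventually_ge_atTop (max R 1), eventually_ge_atTop u₀,
      eventually_ge_atTop (1:ℝ),
      Real.tendsto_log_atTop.eventually_ge_atTop (|Real.log κ'|)] with u h1 h2 h3 h5 h4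
    have hβR : R ≤ β u := le_trans (le_max_left _ _) h2
    have hβ0 : 0 < β u := lt_of_lt_of_le hR0 hβR
    have hu0 : (0:ℝ) < u := lt_of_lt_of_le one_pos h5
    have hfβ0 : 0 < f (β u) := hf_pos _ hβ0
    have hfβ1 : f (β u) < 1 := hfR _ hβR
    have hlogβ : Real.log (f (β u)) < 0 := Real.log_neg hfβ0 hfβ1
    have hGβ : f (β u) ^ 2 * Real.exp (K' * t * g (β u)) = κ' / u := by
      rw [← hG]; exact hβ u h3
    have hlogeq : 2 * Real.log (f (β u)) + K' * t * g (β u)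
        = Real.log κ' - Real.log u := by
      have := congrArg Real.log hGβ
      rwa [Real.log_mul (by positivity) (Real.exp_ne_zero _), Real.log_pow,
        Real.log_exp, Real.log_div (ne_of_gt hκ') (ne_of_gt hu0)] at this
    have hLabs : |Real.log (f (β u))| = -Real.log (f (β u)) := abs_of_neg hlogβ
    have hLpos : 0 < |Real.log (f (β u))| := by rw [hLabs]; linarith
    have hg1 : g (β u) < ε₁ * |Real.log (f (β u))| := (div_lt_iff₀ hLpos).1 h1
    have hg0 : 0 ≤ g (β u) := (hg_pos _ hβ0.le).le
    have hε₁K : ε₁ * (K' * t) ≤ 1 := by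
      have := min_le_right (ε/2) (1/(K'*t))
      calc ε₁ * (K' * t) ≤ (1/(K'*t)) * (K' * t) :=
            mul_le_mul_of_nonneg_right this (by positivity)
        _ = 1 := by field_simp
    have hε₁ε : 2 * ε₁ ≤ ε := by
      have := min_le_left (ε/2) (1/(K'*t))
      linarith
    -- from 2L = K't G + log u - log κ'
    have hkey : 2 * g (β u) < ε₁ * (K' * t * g (β u) + Real.log u - Real.log κ') := by
      rw [hLabs] at hg1
      nlinarith [hg1, hlogeq]
    have h6 : ε₁ * (K' * t * g (β u)) ≤ g (β u) := by
      calc ε₁ * (K' * t * g (β u)) = (ε₁ * (K' * t)) * g (β u) := by ring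
        _ ≤ 1 * g (β u) := mul_le_mul_of_nonneg_right hε₁K hg0
        _ = g (β u) := one_mul _
    have h7 : -Real.log κ' ≤ Real.log u := le_trans (neg_le_abs _) h4
    have h8 : ε₁ * (-Real.log κ') ≤ ε₁ * Real.log u :=
      mul_le_mul_of_nonneg_left h7 hε₁.le
    have hlogu0 : 0 ≤ Real.log u := Real.log_nonneg h5
    nlinarith [mul_le_mul_of_nonneg_right hε₁ε hlogu0]
  -- conclude
  intro δ hδ
  have hδ' : (0:ℝ) < (δ:ℝ) := by exact_mod_cast hδ
  have h0α : ∀ᶠ u : ℝ in atTop, 0 ≤ g (α u) := by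
    filter_upwards [hα_top.eventually_ge_atTop (0:ℝ)] with u hu
    exact (hg_pos _ hu).le
  have h0β : ∀ᶠ u : ℝ in atTop, 0 ≤ g (β u) := by
    filter_upwards [hβ_lim.eventually_ge_atTop (0:ℝ)] with u hu
    exact (hg_pos _ hu).le
  constructor
  · have h := auxKey (K * t) (δ:ℝ) (by positivity) hδ' (fun u => g (α u)) h0α hαbound
    simpa [Real.rpow_natCast] using h
  · have h := auxKey (K' * t) (δ:ℝ) (by positivity) hδ' (fun u => g (β u)) h0β hβbound
    simpa [Real.rpow_natCast] using h
end

section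
/- lim_{u→∞} g(β(u))/g(α(u)) = 1. -/
open Filter Topology Set

set_option maxHeartbeats 1000000

/-- Under the rate condition on `g` with exponent `ω ≥ 0`,
`g(β(u))/g(α(u)) → 1` as `u → ∞`. -/
theorem stmt11
    (f finv : ℝ → ℝ)
    (hf_pos : ∀ r > 0, 0 < f r)
    (hf_anti : StrictAntiOn f (Set.Ioi 0))
    (hf_cont : ContinuousOn f (Set.Ioi 0))
    (hf_bij : Set.BijOn f (Set.Ioi 0) (Set.Ioi 0))
    (hf_inv : Set.InvOn finv f (Set.Ioi 0) (Set.Ioi 0))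
    (g : ℝ → ℝ)
    (hg_pos : ∀ r ≥ 0, 0 < g r)
    (hg_mono : StrictMonoOn g (Set.Ici 0))
    (hg_cont : ContinuousOn g (Set.Ici 0))
    (hg_lim : Tendsto g atTop atTop)
    -- Condition (D)
    (hD : ∃ R > 0, (∀ r ≥ R, f r < 1) ∧
      AntitoneOn (fun r => g r / |Real.log (f r)|) (Set.Ici R) ∧
      Tendsto (fun r => g r / |Real.log (f r)|) atTop (𝓝 0))
    -- Rate condition on g with exponent ω
    (ω : ℝ) (hω : 0 ≤ ω)
    (hrate : ∀ c > 0, ∀ lam ≥ (1:ℝ),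
      limsup (fun s => g (finv (c * s ^ lam)) / g (finv s)) (𝓝[>] (0:ℝ)) ≤ lam ^ ω)
    (K' t κ κ' : ℝ) (hK' : 0 < K') (ht : 0 < t) (hκ : 0 < κ) (hκ' : 0 < κ')
    (α : ℝ → ℝ) (hα : ∀ u > 0, α u = finv ((κ / u) ^ ((1:ℝ) / 2)))
    (G : ℝ → ℝ) (hG : ∀ r, G r = f r ^ 2 * Real.exp (K' * t * g r))
    (u₀ : ℝ) (β : ℝ → ℝ)
    (hβ : ∀ u ≥ u₀, G (β u) = κ' / u)
    (hβ_lim : Tendsto β atTop atTop) :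
    Tendsto (fun u => g (β u) / g (α u)) atTop (𝓝 1) := by
  obtain ⟨R, hR, hfR, hDanti, hDlim⟩ := hD
  -- basic facts about the inverse
  have hfinv : ∀ y : ℝ, 0 < y → 0 < finv y ∧ f (finv y) = y := by
    intro y hy
    obtain ⟨x, hx, hfx⟩ := hf_bij.surjOn (show y ∈ Set.Ioi 0 from hy)
    have hxy : finv y = x := by rw [← hfx]; exact hf_inv.1 hx
    exact ⟨by rw [hxy]; exact hx, by rw [hxy, hfx]⟩
  have hfinv_pos : ∀ y : ℝ, 0 < y → 0 < finv y := fun y hy => (hfinv y hy).1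
  have hffinv : ∀ y : ℝ, 0 < y → f (finv y) = y := fun y hy => (hfinv y hy).2
  -- from f x ≤ y conclude finv y ≤ x, and from y ≤ f x conclude x ≤ finv y
  have key1 : ∀ x y : ℝ, 0 < x → 0 < y → f x ≤ y → finv y ≤ x := by
    intro x y hx hy hfx
    by_contra h
    push_neg at h
    have := hf_anti (mem_Ioi.2 hx) (mem_Ioi.2 (hfinv_pos y hy)) h
    rw [hffinv y hy] at this; linarith
  have key2 : ∀ x y : ℝ, 0 < x → 0 < y → y ≤ f x → x ≤ finv y := by
    intro x y hx hy hfx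
    by_contra h
    push_neg at h
    have := hf_anti (mem_Ioi.2 (hfinv_pos y hy)) (mem_Ioi.2 hx) h
    rw [hffinv y hy] at this; linarith
  have hfinv_anti : ∀ y1 y2 : ℝ, 0 < y1 → y1 ≤ y2 → finv y2 ≤ finv y1 := by
    intro y1 y2 h1 h12
    exact key1 (finv y1) y2 (hfinv_pos y1 h1)
      (lt_of_lt_of_le h1 h12) (by rw [hffinv y1 h1]; exact h12)
  have hgmono := hg_mono.monotoneOn
  have hhpos : ∀ y : ℝ, 0 < y → 0 < g (finv y) :=
    fun y hy => hg_pos _ (hfinv_pos y hy).le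
  -- tendsto of s(u) = (κ/u)^(1/2)
  have hs0 : Tendsto (fun u : ℝ => (κ / u) ^ ((1:ℝ)/2)) atTop (𝓝[>] 0) := by
    rw [tendsto_nhdsWithin_iff]
    constructor
    · have h1 : Tendsto (fun u : ℝ => κ / u) atTop (𝓝 0) :=
        tendsto_const_nhds.div_atTop tendsto_id
      have h2 : ContinuousAt (fun x : ℝ => x ^ ((1:ℝ)/2)) 0 :=
        Real.continuousAt_rpow_const 0 _ (Or.inr (by norm_num))
      have := h2.tendsto.comp h1
      simpa [Function.comp_def, Real.zero_rpow (by norm_num : ((1:ℝ)/2) ≠ 0)] using this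
    · filter_upwards [eventually_gt_atTop 0] with u hu
      exact Real.rpow_pos_of_pos (div_pos hκ hu) _
  -- boundedness of the ratio, from condition (D)
  have hbound : ∀ d : ℝ, 0 < d → ∀ lam : ℝ, 1 ≤ lam →
      ∀ᶠ x in 𝓝[>] (0:ℝ), g (finv (d * x ^ lam)) / g (finv x) ≤ 2 * lam := by
    intro d hd lam hlam
    have hδ : (0:ℝ) < min (min (f R) 1) d := lt_min (lt_min (hf_pos R hR) one_pos) hd
    filter_upwards [self_mem_nhdsWithin,
      (eventually_lt_nhds hδ).filter_mono nhdsWithin_le_nhds] with x hx hxδ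
    have hx0 : 0 < x := hx
    have hxfR : x < f R :=
      lt_of_lt_of_le hxδ (le_trans (min_le_left _ _) (min_le_left _ _))
    have hx1 : x < 1 :=
      lt_of_lt_of_le hxδ (le_trans (min_le_left _ _) (min_le_right _ _))
    have hxd : x < d := lt_of_lt_of_le hxδ (min_le_right _ _)
    have hdx : 0 < d * x ^ lam := mul_pos hd (Real.rpow_pos_of_pos hx0 _)
    have hhx : 0 < g (finv x) := hhpos x hx0
    rcases le_or_gt x (d * x ^ lam) with hcase | hcase
    · have h1 : g (finv (d * x ^ lam)) ≤ g (finv x) :=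
        hgmono (mem_Ici.2 (hfinv_pos _ hdx).le) (mem_Ici.2 (hfinv_pos x hx0).le)
          (hfinv_anti x _ hx0 hcase)
      have h2 : g (finv (d * x ^ lam)) / g (finv x) ≤ 1 := by
        rw [div_le_one hhx]; exact h1
      linarith
    · have hr1 : R ≤ finv x := key2 R x hR hx0 hxfR.le
      have hr2 : R ≤ finv (d * x ^ lam) :=
        key2 R _ hR hdx (le_trans hcase.le hxfR.le)
      have hr12 : finv x ≤ finv (d * x ^ lam) := hfinv_anti _ _ hdx hcase.le
      have hD12 := hDanti (mem_Ici.2 hr1) (mem_Ici.2 hr2) hr12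
      simp only [hffinv x hx0, hffinv _ hdx] at hD12
      have hlogx : Real.log x < 0 := Real.log_neg hx0 hx1
      have hlogdx : Real.log (d * x ^ lam) < 0 :=
        Real.log_neg hdx (lt_trans hcase hx1)
      rw [abs_of_neg hlogx, abs_of_neg hlogdx] at hD12
      have hlog_bound : -Real.log (d * x ^ lam) ≤ 2 * lam * (-Real.log x) := by
        rw [Real.log_mul hd.ne' (Real.rpow_pos_of_pos hx0 _).ne', Real.log_rpow hx0]
        have hld : Real.log x ≤ Real.log d := Real.log_le_log hx0 hxd.le
        have hml : lam * Real.log x ≤ 1 * Real.log x :=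
          mul_le_mul_of_nonpos_right hlam hlogx.le
        linarith
      rw [div_le_div_iff₀ (by linarith) (by linarith)] at hD12
      rw [div_le_iff₀ hhx]
      have hL : 0 < -Real.log x := by linarith
      have hchain : g (finv (d * x ^ lam)) * (-Real.log x) ≤
          (2 * lam * g (finv x)) * (-Real.log x) := by
        calc g (finv (d * x ^ lam)) * (-Real.log x)
            ≤ g (finv x) * (-Real.log (d * x ^ lam)) := hD12
          _ ≤ g (finv x) * (2 * lam * (-Real.log x)) :=
              mul_le_mul_of_nonneg_left hlog_bound hhx.le
          _ = (2 * lam * g (finv x)) * (-Real.log x) := by ring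
      exact le_of_mul_le_mul_right hchain hL
  -- eventual-strict-bound from the limsup rate condition
  have hev : ∀ d : ℝ, 0 < d → ∀ lam : ℝ, 1 ≤ lam → ∀ b : ℝ, lam ^ ω < b →
      ∀ᶠ x in 𝓝[>] (0:ℝ), g (finv (d * x ^ lam)) / g (finv x) < b := by
    intro d hd lam hlam b hb
    have hbdd : IsBoundedUnder (· ≤ ·) (𝓝[>] (0:ℝ))
        (fun x => g (finv (d * x ^ lam)) / g (finv x)) :=
      ⟨2 * lam, by simpa [eventually_map] using hbound d hd lam hlam⟩
    exact Filter.eventually_lt_of_limsup_lt (lt_of_le_of_lt (hrate d hd lam hlam) hb) hbdd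
  ------------------------------------------------------------------
  rw [Metric.tendsto_nhds]
  intro ε hε
  set ε' : ℝ := min ε (1/2) with hε'def
  have hε'pos : 0 < ε' := lt_min hε (by norm_num)
  have hε'le : ε' ≤ ε := min_le_left _ _
  have hε'half : ε' ≤ 1/2 := min_le_right _ _
  have hKt : 0 < K' * t := mul_pos hK' ht
  -- choose ε₃ such that lam := 1 + K'tε₃ satisfies lam^ω < 1+ε' and K'tε₃ ≤ 1
  have hcont : Tendsto (fun x : ℝ => x ^ ω) (𝓝 1) (𝓝 1) := by
    have := (Real.continuousAt_rpow_const 1 ω (Or.inl one_ne_zero)).tendsto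
    simpa [Real.one_rpow] using this
  have h1 : ∀ᶠ lam : ℝ in 𝓝 1, lam ^ ω < 1 + ε' :=
    hcont.eventually_lt_const (by linarith)
  obtain ⟨δ, hδpos, hδ⟩ := Metric.eventually_nhds_iff.mp h1
  set ε₃ : ℝ := min (1 / (K' * t)) (δ / (2 * (K' * t))) with hε₃def
  have hε₃pos : 0 < ε₃ :=
    lt_min (by positivity) (by positivity)
  have hε₃a : K' * t * ε₃ ≤ 1 := by
    have : ε₃ ≤ 1 / (K' * t) := min_le_left _ _
    rw [le_div_iff₀ hKt] at this; linarith [this]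
  have hε₃b : K' * t * ε₃ < δ := by
    have h2 : ε₃ ≤ δ / (2 * (K' * t)) := min_le_right _ _
    have h3 : K' * t * ε₃ ≤ δ / 2 := by
      rw [le_div_iff₀ (by norm_num : (0:ℝ) < 2)]
      calc K' * t * ε₃ * 2 = ε₃ * (2 * (K' * t)) := by ring
        _ ≤ δ / (2 * (K' * t)) * (2 * (K' * t)) := by
            apply mul_le_mul_of_nonneg_right h2 (by positivity)
        _ = δ := by field_simp
    linarith
  set lam : ℝ := 1 + K' * t * ε₃ with hlamdef
  have hKtε₃ : 0 < K' * t * ε₃ := mul_pos hKt hε₃pos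
  have hlam1 : 1 ≤ lam := by simp only [hlamdef]; linarith
  have hlam_lt : lam ^ ω < 1 + ε' := by
    apply hδ
    rw [Real.dist_eq]
    simp only [hlamdef]
    rw [abs_of_nonneg (by linarith : (0:ℝ) ≤ 1 + K' * t * ε₃ - 1)]
    linarith
  set c : ℝ := (κ' / κ) ^ ((1:ℝ)/2) with hcdef
  set d : ℝ := (κ' / κ) ^ (lam / 2) with hddef
  have hκκ' : 0 < κ' / κ := div_pos hκ' hκ
  have hc : 0 < c := Real.rpow_pos_of_pos hκκ' _
  have hd : 0 < d := Real.rpow_pos_of_pos hκκ' _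
  -- transferred eventual facts along u → ∞
  have E1 : ∀ᶠ u in atTop,
      g (finv (d * ((κ / u) ^ ((1:ℝ)/2)) ^ lam)) / g (finv ((κ / u) ^ ((1:ℝ)/2))) < 1 + ε' :=
    hs0.eventually (hev d hd lam hlam1 _ hlam_lt)
  have hb' : (1:ℝ) ^ ω < 1 / (1 - ε') := by
    rw [Real.one_rpow, lt_div_iff₀ (by linarith : (0:ℝ) < 1 - ε')]
    linarith
  have hcs : Tendsto (fun u : ℝ => c * (κ / u) ^ ((1:ℝ)/2)) atTop (𝓝[>] 0) := by
    rw [tendsto_nhdsWithin_iff] at hs0 ⊢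
    constructor
    · have := hs0.1.const_mul c
      simpa using this
    · filter_upwards [hs0.2] with u hu
      exact mul_pos hc hu
  have E2 : ∀ᶠ u in atTop,
      g (finv (c⁻¹ * (c * (κ / u) ^ ((1:ℝ)/2)) ^ (1:ℝ))) / g (finv (c * (κ / u) ^ ((1:ℝ)/2))) <
        1 / (1 - ε') :=
    hcs.eventually (hev c⁻¹ (inv_pos.2 hc) 1 le_rfl _ hb')
  -- main eventual argument
  have hDβ : ∀ᶠ u in atTop, g (β u) / |Real.log (f (β u))| < ε₃ :=
    (hDlim.comp hβ_lim).eventually_lt_const hε₃pos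
  filter_upwards [E1, E2, eventually_ge_atTop u₀, eventually_gt_atTop (max 1 κ'),
    hβ_lim.eventually_ge_atTop R, hDβ, eventually_gt_atTop 0] with u hE1 hE2 hu₀ huM hβR hDu hu0
  have huκ' : κ' < u := lt_of_le_of_lt (le_max_right _ _) huM
  have hsu : 0 < (κ / u) ^ ((1:ℝ)/2) := Real.rpow_pos_of_pos (div_pos hκ hu0) _
  have hβpos : 0 < β u := lt_of_lt_of_le hR hβR
  have hfβpos : 0 < f (β u) := hf_pos _ hβpos
  have hfβ1 : f (β u) < 1 := hfR _ hβR
  have hgβpos : 0 < g (β u) := hg_pos _ hβpos.le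
  have hκ'u : 0 < κ' / u := div_pos hκ' hu0
  have heq : f (β u) ^ 2 * Real.exp (K' * t * g (β u)) = κ' / u := by
    rw [← hG]; exact hβ u hu₀
  have hlogfβ : Real.log (f (β u)) < 0 := Real.log_neg hfβpos hfβ1
  have hlog_eq : 2 * Real.log (f (β u)) + K' * t * g (β u) = Real.log κ' - Real.log u := by
    have h := congrArg Real.log heq
    rw [Real.log_mul (pow_ne_zero _ hfβpos.ne') (Real.exp_ne_zero _), Real.log_exp,
      Real.log_pow, Real.log_div hκ'.ne' hu0.ne'] at h
    push_cast at h
    linarith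
  -- from condition (D): g (β u) < ε₃ * (log u - log κ')
  have habs : |Real.log (f (β u))| = -Real.log (f (β u)) := abs_of_neg hlogfβ
  have hgβ_lt : g (β u) < ε₃ * (-Real.log (f (β u))) := by
    rw [habs] at hDu
    rw [div_lt_iff₀ (by linarith : (0:ℝ) < -Real.log (f (β u)))] at hDu
    linarith [hDu]
  have haux : K' * t * ε₃ * g (β u) ≤ g (β u) := by
    have := mul_le_mul_of_nonneg_right hε₃a hgβpos.le
    linarith
  have hgβL : g (β u) < ε₃ * (Real.log u - Real.log κ') := by
    have hneg : -Real.log (f (β u)) =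
        (K' * t * g (β u) + (Real.log u - Real.log κ')) / 2 := by linarith
    rw [hneg] at hgβ_lt
    have hexpand : ε₃ * ((K' * t * g (β u) + (Real.log u - Real.log κ')) / 2) =
        K' * t * ε₃ * g (β u) / 2 + ε₃ * (Real.log u - Real.log κ') / 2 := by ring
    rw [hexpand] at hgβ_lt
    linarith
  -- lower bound:  f(βu) ≤ c·s(u),  hence  g(βu) ≥ g(finv(c·s(u)))
  have hcs_sq : (c * (κ / u) ^ ((1:ℝ)/2)) ^ 2 = κ' / u := by
    rw [mul_pow, hcdef, ← Real.rpow_natCast ((κ'/κ) ^ ((1:ℝ)/2)) 2,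
      ← Real.rpow_natCast ((κ/u) ^ ((1:ℝ)/2)) 2,
      ← Real.rpow_mul hκκ'.le, ← Real.rpow_mul (div_pos hκ hu0).le]
    norm_num
    field_simp
  have hfβ_le : f (β u) ^ 2 ≤ κ' / u := by
    have h1 : (1:ℝ) ≤ Real.exp (K' * t * g (β u)) :=
      Real.one_le_exp (by positivity)
    have h2 : f (β u) ^ 2 * 1 ≤ f (β u) ^ 2 * Real.exp (K' * t * g (β u)) :=
      mul_le_mul_of_nonneg_left h1 (sq_nonneg _)
    linarith
  have hfβ_le' : f (β u) ≤ c * (κ / u) ^ ((1:ℝ)/2) := by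
    apply le_of_pow_le_pow_left₀ two_ne_zero (by positivity)
    rw [hcs_sq]; exact hfβ_le
  have hlow1 : finv (c * (κ / u) ^ ((1:ℝ)/2)) ≤ β u :=
    key1 _ _ hβpos (by positivity) hfβ_le'
  have hlow2 : g (finv (c * (κ / u) ^ ((1:ℝ)/2))) ≤ g (β u) :=
    hgmono (mem_Ici.2 (hfinv_pos _ (by positivity)).le) (mem_Ici.2 hβpos.le) hlow1
  -- simplify E2
  have hsimp : c⁻¹ * (c * (κ / u) ^ ((1:ℝ)/2)) ^ (1:ℝ) = (κ / u) ^ ((1:ℝ)/2) := by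
    rw [Real.rpow_one]; field_simp
  rw [hsimp] at hE2
  have hgsu : 0 < g (finv ((κ / u) ^ ((1:ℝ)/2))) := hhpos _ hsu
  have hgcsu : 0 < g (finv (c * (κ / u) ^ ((1:ℝ)/2))) := hhpos _ (by positivity)
  have hlow3 : (1 - ε') * g (finv ((κ / u) ^ ((1:ℝ)/2))) < g (β u) := by
    rw [div_lt_div_iff₀ hgcsu (by linarith : (0:ℝ) < 1 - ε')] at hE2
    linarith
  -- upper bound: f(βu) ≥ d · s(u)^lam, hence g(βu) ≤ g(finv(d·s(u)^lam))
  have hexp_ge : Real.exp (-(K' * t * g (β u))) ≥ (κ' / u) ^ (K' * t * ε₃) := by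
    rw [Real.rpow_def_of_pos hκ'u, Real.log_div hκ'.ne' hu0.ne']
    apply Real.exp_le_exp.2
    have h2 : K' * t * g (β u) ≤ K' * t * (ε₃ * (Real.log u - Real.log κ')) :=
      mul_le_mul_of_nonneg_left hgβL.le hKt.le
    have hring : K' * t * (ε₃ * (Real.log u - Real.log κ')) =
        -((Real.log κ' - Real.log u) * (K' * t * ε₃)) := by ring
    linarith [h2]
  have hsq_eq : f (β u) ^ 2 = (κ' / u) * Real.exp (-(K' * t * g (β u))) := by
    rw [Real.exp_neg, ← heq]
    field_simp
  have hsq_ge : (κ' / u) ^ lam ≤ f (β u) ^ 2 := by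
    rw [hsq_eq, hlamdef, Real.rpow_add hκ'u, Real.rpow_one]
    exact mul_le_mul_of_nonneg_left hexp_ge hκ'u.le
  have hA_sq : ((κ' / u) ^ (lam / 2)) ^ 2 = (κ' / u) ^ lam := by
    rw [← Real.rpow_natCast ((κ'/u) ^ (lam/2)) 2, ← Real.rpow_mul hκ'u.le]
    norm_num
  have hA_le : (κ' / u) ^ (lam / 2) ≤ f (β u) := by
    apply le_of_pow_le_pow_left₀ two_ne_zero hfβpos.le
    rw [hA_sq]; exact hsq_ge
  have hA_eq : d * ((κ / u) ^ ((1:ℝ)/2)) ^ lam = (κ' / u) ^ (lam / 2) := by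
    rw [hddef, ← Real.rpow_mul (div_pos hκ hu0).le]
    rw [show (1:ℝ)/2 * lam = lam / 2 by ring]
    rw [← Real.mul_rpow hκκ'.le (div_pos hκ hu0).le]
    congr 1
    field_simp
  have hup1 : β u ≤ finv (d * ((κ / u) ^ ((1:ℝ)/2)) ^ lam) := by
    apply key2 _ _ hβpos (by positivity)
    rw [hA_eq]; exact hA_le
  have hup2 : g (β u) ≤ g (finv (d * ((κ / u) ^ ((1:ℝ)/2)) ^ lam)) :=
    hgmono (mem_Ici.2 hβpos.le)
      (mem_Ici.2 (hfinv_pos _ (by positivity)).le) hup1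
  have hup3 : g (β u) < (1 + ε') * g (finv ((κ / u) ^ ((1:ℝ)/2))) := by
    rw [div_lt_iff₀ hgsu] at hE1
    linarith [hup2, hE1]
  -- conclusion
  rw [Real.dist_eq, hα u hu0]
  rw [abs_sub_lt_iff]
  constructor
  · have : g (β u) / g (finv ((κ / u) ^ ((1:ℝ)/2))) < 1 + ε' := by
      rw [div_lt_iff₀ hgsu]; linarith [hup3]
    linarith [hε'le, this]
  · have : 1 - ε' < g (β u) / g (finv ((κ / u) ^ ((1:ℝ)/2))) := by
      rw [lt_div_iff₀ hgsu]; linarith [hlow3]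
    linarith [hε'le, this]
end

section
/- (i) For every ε ∈ (0, 2−b) there exists r_ε > 0 with f(r)² ≤ H(r) ≤ f(r)^{2−b−ε} for all r > r_ε. (ii) 1 ≤ liminf_{u→∞} g(γ(u))/g(α(u)) ≤ limsup_{u→∞} g(γ(u))/g(α(u)) ≤ (2/(2−b))^ω. (iii) For every δ > 0, lim_{u→∞} g(γ(u))² e^{K̃ t g(γ(u))} / u^δ = 0. -/
open Filter Topology Set

set_option maxHeartbeats 2000000 in
/-- With `H(r) = f(r)² r^{d−1} η(r) e^{K' t g(r)}` and `γ` the generalized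
inverse along `H(γ(u)) = κ'/u`:
(i) for every `ε ∈ (0, 2−b)` eventually `f(r)² ≤ H(r) ≤ f(r)^{2−b−ε}`;
(ii) `1 ≤ liminf g(γ(u))/g(α(u)) ≤ limsup g(γ(u))/g(α(u)) ≤ (2/(2−b))^ω`;
(iii) for every `δ > 0`, `g(γ(u))² e^{K' t g(γ(u))}/u^δ → 0`. -/
theorem stmt12
    (d : ℕ) (hd : 1 ≤ d)
    (f finv : ℝ → ℝ)
    (hf_pos : ∀ r > 0, 0 < f r)
    (hf_anti : StrictAntiOn f (Set.Ioi 0))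
    (hf_cont : ContinuousOn f (Set.Ioi 0))
    (hf_bij : Set.BijOn f (Set.Ioi 0) (Set.Ioi 0))
    (hf_inv : Set.InvOn finv f (Set.Ioi 0) (Set.Ioi 0))
    (g : ℝ → ℝ)
    (hg_pos : ∀ r ≥ 0, 0 < g r)
    (hg_mono : StrictMonoOn g (Set.Ici 0))
    (hg_cont : ContinuousOn g (Set.Ici 0))
    (hg_lim : Tendsto g atTop atTop)
    -- Condition (D)
    (hD : ∃ R > 0, (∀ r ≥ R, f r < 1) ∧
      AntitoneOn (fun r => g r / |Real.log (f r)|) (Set.Ici R) ∧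
      Tendsto (fun r => g r / |Real.log (f r)|) atTop (𝓝 0))
    -- Rate condition on g with exponent ω
    (ω : ℝ) (hω : 0 ≤ ω)
    (hrate : ∀ c > 0, ∀ lam ≥ (1:ℝ),
      limsup (fun s => g (finv (c * s ^ lam)) / g (finv s)) (𝓝[>] (0:ℝ)) ≤ lam ^ ω)
    (K' t κ κ' : ℝ) (hK' : 0 < K') (ht : 0 < t) (hκ : 0 < κ) (hκ' : 0 < κ')
    (η : ℝ → ℝ)
    (hη_pos : ∀ r ≥ 0, 0 < η r)
    (hη_mono : MonotoneOn η (Set.Ici 0))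
    (hη_cont : ContinuousOn η (Set.Ici 0))
    (hη_int : MeasureTheory.IntegrableOn (fun r => (η r)⁻¹) (Set.Ici 1))
    (b : ℝ) (hb : b ∈ Set.Ico (0:ℝ) 2)
    (hb_anti : ∃ R : ℝ, AntitoneOn
      (fun r => (((d : ℝ) - 1) * Real.log r + Real.log (η r)) / |Real.log (f r)|)
      (Set.Ici R))
    (hb_lim : Tendsto
      (fun r => (((d : ℝ) - 1) * Real.log r + Real.log (η r)) / |Real.log (f r)|)
      atTop (𝓝 b))
    (H : ℝ → ℝ)
    (hH : ∀ r, H r = f r ^ 2 * r ^ (d - 1) * η r * Real.exp (K' * t * g r))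
    (u₀ : ℝ) (γ : ℝ → ℝ)
    (hγ : ∀ u ≥ u₀, H (γ u) = κ' / u)
    (hγ_lim : Tendsto γ atTop atTop)
    (α : ℝ → ℝ) (hα : ∀ u > 0, α u = finv ((κ / u) ^ ((1:ℝ) / 2))) :
    (∀ ε ∈ Set.Ioo (0:ℝ) (2 - b), ∃ rε > 0, ∀ r > rε,
      f r ^ 2 ≤ H r ∧ H r ≤ f r ^ (2 - b - ε)) ∧
    (1 ≤ liminf (fun u => g (γ u) / g (α u)) atTop ∧
      liminf (fun u => g (γ u) / g (α u)) atTop ≤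
        limsup (fun u => g (γ u) / g (α u)) atTop ∧
      limsup (fun u => g (γ u) / g (α u)) atTop ≤ (2 / (2 - b)) ^ ω) ∧
    (∀ δ > 0,
      Tendsto (fun u => g (γ u) ^ 2 * Real.exp (K' * t * g (γ u)) / u ^ δ) atTop (𝓝 0)) := by

  obtain ⟨R, hRpos, hfR1, hDanti, hDlim⟩ := hD
  have hb2 : b < 2 := hb.2
  have hb0 : 0 ≤ b := hb.1
  have hKt : 0 < K' * t := mul_pos hK' ht
  -- f is eventually smaller than any positive number
  have hf_lt : ∀ ε : ℝ, 0 < ε → ∀ᶠ r in atTop, f r < ε := by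
    intro ε hε
    obtain ⟨r₀, hr₀mem, hr₀⟩ := hf_bij.surjOn (show ε ∈ Set.Ioi (0:ℝ) from hε)
    filter_upwards [eventually_gt_atTop r₀] with r hr
    have : f r < f r₀ := hf_anti hr₀mem (lt_trans hr₀mem hr) hr
    rwa [hr₀] at this
  have hexp_top : Tendsto (fun r => Real.exp (K' * t * g r)) atTop atTop := by
    have := hg_lim.const_mul_atTop hKt
    exact Real.tendsto_exp_atTop.comp this
  -- Part (i), eventual version
  have key1 : ∀ ε ∈ Set.Ioo (0:ℝ) (2 - b), ∀ᶠ r in atTop,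
      f r ^ 2 ≤ H r ∧ H r ≤ f r ^ (2 - b - ε) := by
    intro ε hε
    obtain ⟨hε0, hε2⟩ := hε
    have h1 : ∀ᶠ r in atTop,
        (((d : ℝ) - 1) * Real.log r + Real.log (η r)) / |Real.log (f r)| < b + ε / 2 :=
      hb_lim.eventually_lt_const (by linarith)
    have h2 : ∀ᶠ r in atTop, g r / |Real.log (f r)| < ε / 2 / (K' * t) :=
      hDlim.eventually_lt_const (by positivity)
    have h3 : ∀ᶠ r in atTop, (η 1)⁻¹ ≤ Real.exp (K' * t * g r) :=
      hexp_top.eventually_ge_atTop _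
    filter_upwards [h1, h2, h3, hf_lt 1 one_pos, eventually_ge_atTop (1:ℝ)]
      with r hr1 hr2 hr3 hrf1 hr1'
    have hr0 : (0:ℝ) < r := lt_of_lt_of_le one_pos hr1'
    have hfr0 : 0 < f r := hf_pos r hr0
    have hlogf : Real.log (f r) < 0 := Real.log_neg hfr0 hrf1
    have habs : |Real.log (f r)| = -Real.log (f r) := abs_of_neg hlogf
    have hL0 : 0 < -Real.log (f r) := neg_pos.mpr hlogf
    have hηr : 0 < η r := hη_pos r hr0.le
    have hη1 : 0 < η 1 := hη_pos 1 one_pos.le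
    constructor
    · -- lower bound
      have hpow : (1:ℝ) ≤ r ^ (d - 1) := one_le_pow₀ hr1'
      have h4 : 1 ≤ η r * Real.exp (K' * t * g r) := by
        have hmm : η 1 * (η 1)⁻¹ ≤ η r * Real.exp (K' * t * g r) :=
          mul_le_mul (hη_mono (Set.mem_Ici.mpr (le_of_lt one_pos)) (Set.mem_Ici.mpr hr0.le) hr1') hr3 (by positivity) hηr.le
        rwa [mul_inv_cancel₀ hη1.ne'] at hmm
      have h5 : (1:ℝ) * 1 ≤ r ^ (d - 1) * (η r * Real.exp (K' * t * g r)) :=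
        mul_le_mul hpow h4 one_pos.le (le_trans one_pos.le hpow)
      rw [hH]
      calc f r ^ 2 = f r ^ 2 * (1 * 1) := by ring
        _ ≤ f r ^ 2 * (r ^ (d - 1) * (η r * Real.exp (K' * t * g r))) :=
            mul_le_mul_of_nonneg_left h5 (sq_nonneg _)
        _ = f r ^ 2 * r ^ (d - 1) * η r * Real.exp (K' * t * g r) := by ring
    · -- upper bound
      have hd1 : ((d:ℝ) - 1) = ((d - 1 : ℕ) : ℝ) := by
        rw [Nat.cast_sub hd]; norm_num
      have hrpow : (0:ℝ) < r ^ (d - 1) := pow_pos hr0 _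
      have hHeq : H r = Real.exp (2 * Real.log (f r) +
          ((((d:ℝ) - 1) * Real.log r + Real.log (η r)) + K' * t * g r)) := by
        have e1 : Real.exp (2 * Real.log (f r)) = f r ^ 2 := by
          rw [show (2:ℝ) * Real.log (f r) = ((2:ℕ):ℝ) * Real.log (f r) by norm_num,
            ← Real.log_pow, Real.exp_log (pow_pos hfr0 2)]
        have e2 : Real.exp (((d:ℝ) - 1) * Real.log r) = r ^ (d - 1) := by
          rw [hd1, ← Real.log_pow, Real.exp_log hrpow]
        have e3 : Real.exp (Real.log (η r)) = η r := Real.exp_log hηr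
        rw [hH, Real.exp_add, Real.exp_add, Real.exp_add, e1, e2, e3]
        ring
      have hfpow : f r ^ (2 - b - ε) = Real.exp (Real.log (f r) * (2 - b - ε)) :=
        Real.rpow_def_of_pos hfr0 _
      rw [hHeq, hfpow]
      apply Real.exp_le_exp.mpr
      have hA : (((d:ℝ) - 1) * Real.log r + Real.log (η r)) < (b + ε/2) * (-Real.log (f r)) := by
        rw [habs] at hr1; exact (div_lt_iff₀ hL0).mp hr1
      have hg' : K' * t * g r < (ε/2) * (-Real.log (f r)) := by
        rw [habs] at hr2
        have h6 := (div_lt_iff₀ hL0).mp hr2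
        calc K' * t * g r < K' * t * (ε / 2 / (K' * t) * (-Real.log (f r))) :=
              mul_lt_mul_of_pos_left h6 hKt
          _ = ε / 2 * (-Real.log (f r)) := by field_simp
      nlinarith [hA, hg']
  have part1 : ∀ ε ∈ Set.Ioo (0:ℝ) (2 - b), ∃ rε > 0, ∀ r > rε,
      f r ^ 2 ≤ H r ∧ H r ≤ f r ^ (2 - b - ε) := by
    intro ε hε
    obtain ⟨a, ha⟩ := eventually_atTop.mp (key1 ε hε)
    exact ⟨max a 1, lt_of_lt_of_le one_pos (le_max_right a 1),
      fun r hr => ha r ((le_max_left a 1).trans hr.le)⟩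

  -- inverse function facts
  have hfinv_bij : Set.BijOn finv (Set.Ioi 0) (Set.Ioi 0) := hf_bij.symm hf_inv.symm
  have hfinv_pos : ∀ x : ℝ, 0 < x → 0 < finv x := fun x hx => hfinv_bij.mapsTo hx
  have hffinv : ∀ x : ℝ, 0 < x → f (finv x) = x := fun x hx => hf_inv.2 hx
  have hf_le_rev : ∀ a c : ℝ, 0 < a → 0 < c → f c ≤ f a → a ≤ c := by
    intro a c ha hc h
    by_contra hlt
    push_neg at hlt
    have := hf_anti (Set.mem_Ioi.mpr hc) (Set.mem_Ioi.mpr ha) hlt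
    linarith
  have hdivle : ∀ a b c : ℝ, 0 < c → a ≤ b → a / c ≤ b / c := by
    intro a b c hc h
    rw [div_le_div_iff₀ hc hc]
    exact mul_le_mul_of_nonneg_right h hc.le
  have hfinv_tendsto : Tendsto finv (𝓝[>] (0:ℝ)) atTop := by
    rw [tendsto_atTop]
    intro M
    have hM : (0:ℝ) < max M 1 := lt_of_lt_of_le one_pos (le_max_right M 1)
    have hfM : 0 < f (max M 1) := hf_pos _ hM
    filter_upwards [Ioo_mem_nhdsGT hfM] with x hx
    have hx0 : 0 < x := hx.1
    have h2 : max M 1 ≤ finv x :=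
      hf_le_rev _ _ hM (hfinv_pos x hx0) (by rw [hffinv x hx0]; exact hx.2.le)
    exact le_trans (le_max_left M 1) h2
  have hrpow0 : ∀ p : ℝ, 0 < p → Tendsto (fun x : ℝ => x ^ p) (𝓝[>] (0:ℝ)) (𝓝[>] 0) := by
    intro p hp
    rw [tendsto_nhdsWithin_iff]
    constructor
    · have h1 : Tendsto (fun x : ℝ => Real.exp (Real.log x * p)) (𝓝[>] (0:ℝ)) (𝓝 0) :=
        Real.tendsto_exp_atBot.comp (Real.tendsto_log_nhdsGT_zero.atBot_mul_const hp)
      refine h1.congr' ?_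
      filter_upwards [self_mem_nhdsWithin] with x hx
      exact (Real.rpow_def_of_pos hx p).symm
    · filter_upwards [self_mem_nhdsWithin] with x hx
      exact Real.rpow_pos_of_pos hx p
  have hconstmul : ∀ c : ℝ, 0 < c → Tendsto (fun x : ℝ => c * x) (𝓝[>] (0:ℝ)) (𝓝[>] 0) := by
    intro c hc
    rw [tendsto_nhdsWithin_iff]
    constructor
    · refine Tendsto.mono_left ?_ nhdsWithin_le_nhds
      simpa using (continuous_mul_left c).tendsto (0:ℝ)
    · filter_upwards [self_mem_nhdsWithin] with x hx
      exact mul_pos hc hx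
  -- Lemma B : boundedness of the rate ratios near 0
  have lemB : ∀ c : ℝ, 0 < c → ∀ lam : ℝ, 1 ≤ lam →
      ∀ᶠ x in 𝓝[>] (0:ℝ), g (finv (c * x ^ lam)) / g (finv x) ≤ lam + 1 := by
    intro c hc lam hlam
    have hlam0 : (0:ℝ) < lam := lt_of_lt_of_le one_pos hlam
    have hmap : Tendsto (fun x : ℝ => c * x ^ lam) (𝓝[>] (0:ℝ)) (𝓝[>] 0) :=
      (hconstmul c hc).comp (hrpow0 lam hlam0)
    have E1 : ∀ᶠ x in 𝓝[>] (0:ℝ), R ≤ finv x :=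
      hfinv_tendsto.eventually (eventually_ge_atTop R)
    have E2 : ∀ᶠ x in 𝓝[>] (0:ℝ), R ≤ finv (c * x ^ lam) :=
      (hfinv_tendsto.comp hmap).eventually (eventually_ge_atTop R)
    have E3 : ∀ᶠ x in 𝓝[>] (0:ℝ), Real.log x ≤ -|Real.log c| - 1 :=
      Real.tendsto_log_nhdsGT_zero.eventually (eventually_le_atBot _)
    filter_upwards [E1, E2, E3, self_mem_nhdsWithin] with x hE1 hE2 hE3 hx0
    have hx0 : (0:ℝ) < x := hx0
    have hr₁pos : 0 < finv x := hfinv_pos x hx0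
    have hr₂arg : 0 < c * x ^ lam := mul_pos hc (Real.rpow_pos_of_pos hx0 lam)
    have hr₂pos : 0 < finv (c * x ^ lam) := hfinv_pos _ hr₂arg
    have hg₁ : 0 < g (finv x) := hg_pos _ hr₁pos.le
    have hg₂ : 0 < g (finv (c * x ^ lam)) := hg_pos _ hr₂pos.le
    rw [div_le_iff₀ hg₁]
    rcases le_or_gt (finv (c * x ^ lam)) (finv x) with hle | hlt
    · have h5 := hg_mono.monotoneOn (Set.mem_Ici.mpr hr₂pos.le) (Set.mem_Ici.mpr hr₁pos.le) hle
      nlinarith [hg₁]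
    · have hanti := hDanti (Set.mem_Ici.mpr hE1) (Set.mem_Ici.mpr hE2) hlt.le
      have hfx : f (finv x) = x := hffinv x hx0
      have hfx2 : f (finv (c * x ^ lam)) = c * x ^ lam := hffinv _ hr₂arg
      have hx1 : f (finv x) < 1 := hfR1 _ hE1
      have hcx1 : c * x ^ lam < 1 := by rw [← hfx2]; exact hfR1 _ hE2
      have hlogx : Real.log x < 0 := Real.log_neg hx0 (by rw [← hfx]; exact hx1)
      have habs1 : |Real.log (f (finv x))| = -Real.log x := by
        rw [hfx]; exact abs_of_neg hlogx
      have hlogcx : Real.log (c * x ^ lam) = Real.log c + lam * Real.log x := by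
        rw [Real.log_mul hc.ne' (Real.rpow_pos_of_pos hx0 lam).ne', Real.log_rpow hx0]
      have hlogcx0 : Real.log (c * x ^ lam) < 0 := Real.log_neg hr₂arg hcx1
      have habs2 : |Real.log (f (finv (c * x ^ lam)))| = -(Real.log c + lam * Real.log x) := by
        rw [hfx2, abs_of_neg hlogcx0, hlogcx]
      have hb1 : -(Real.log c + lam * Real.log x) ≤ (lam + 1) * (-Real.log x) := by
        have h7 : -Real.log c ≤ |Real.log c| := neg_le_abs _
        nlinarith [hE3, hlam0]
      simp only at hanti
      rw [habs1, habs2] at hanti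
      have hL2pos : 0 < -(Real.log c + lam * Real.log x) := by
        have h9 := neg_pos.mpr hlogcx0
        rwa [hlogcx] at h9
      have hLxpos : 0 < -Real.log x := neg_pos.mpr hlogx
      rw [div_le_div_iff₀ hL2pos hLxpos] at hanti
      have h8 : g (finv (c * x ^ lam)) * (-Real.log x)
          ≤ (lam + 1) * g (finv x) * (-Real.log x) := by
        calc g (finv (c * x ^ lam)) * (-Real.log x)
            ≤ g (finv x) * (-(Real.log c + lam * Real.log x)) := hanti
          _ ≤ g (finv x) * ((lam + 1) * (-Real.log x)) :=
              mul_le_mul_of_nonneg_left hb1 hg₁.le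
          _ = (lam + 1) * g (finv x) * (-Real.log x) := by ring
      exact le_of_mul_le_mul_right h8 hLxpos
  -- Lemma C : eventual strict bounds from the rate condition
  have lemC : ∀ c : ℝ, 0 < c → ∀ lam : ℝ, 1 ≤ lam → ∀ b' : ℝ, lam ^ ω < b' →
      ∀ᶠ x in 𝓝[>] (0:ℝ), g (finv (c * x ^ lam)) / g (finv x) < b' := by
    intro c hc lam hlam b' hb'
    have hbound : IsBoundedUnder (· ≤ ·) (𝓝[>] (0:ℝ))
        (fun x => g (finv (c * x ^ lam)) / g (finv x)) :=
      ⟨lam + 1, eventually_map.mpr (lemB c hc lam hlam)⟩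
    exact eventually_lt_of_limsup_lt (lt_of_le_of_lt (hrate c hc lam hlam) hb') hbound
  have hs_tendsto : Tendsto (fun u : ℝ => (κ / u) ^ ((1:ℝ)/2)) atTop (𝓝[>] 0) := by
    apply (hrpow0 ((1:ℝ)/2) (by norm_num)).comp
    rw [tendsto_nhdsWithin_iff]
    constructor
    · exact tendsto_const_nhds.div_atTop tendsto_id
    · filter_upwards [eventually_gt_atTop 0] with u hu
      exact div_pos hκ hu
  have hident : ∀ q : ℝ, ∀ u : ℝ, 0 < u → (κ' / u) ^ q =
      (κ' / κ) ^ q * ((κ / u) ^ ((1:ℝ)/2)) ^ (2 * q) := by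
    intro q u hu
    have hκ0 : κ ≠ 0 := hκ.ne'
    have hu0 : u ≠ 0 := hu.ne'
    have h1 : ((κ / u) ^ ((1:ℝ)/2)) ^ (2 * q) = (κ / u) ^ q := by
      rw [← Real.rpow_mul (div_pos hκ hu).le]
      congr 1
      ring
    rw [h1, show κ' / u = κ' / κ * (κ / u) by field_simp,
      Real.mul_rpow (by positivity) (by positivity)]
  -- bounds on f (γ u)
  have keyf : ∀ ε ∈ Set.Ioo (0:ℝ) (2 - b), ∀ᶠ u in atTop,
      0 < γ u ∧ f (γ u) ≤ (κ' / u) ^ ((1:ℝ)/2) ∧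
        (κ' / u) ^ ((1:ℝ)/(2 - b - ε)) ≤ f (γ u) := by
    intro ε hε
    have hm : 0 < 2 - b - ε := by linarith [hε.2]
    filter_upwards [hγ_lim.eventually (key1 ε hε), hγ_lim.eventually_gt_atTop 0,
      eventually_ge_atTop u₀, eventually_gt_atTop (0:ℝ)] with u hu hγpos hu₀ hupos
    obtain ⟨hlow, hupp⟩ := hu
    rw [hγ u hu₀] at hlow hupp
    have hκ'u : 0 < κ' / u := div_pos hκ' hupos
    have hfγ : 0 < f (γ u) := hf_pos _ hγpos
    refine ⟨hγpos, ?_, ?_⟩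
    · have h0 := Real.rpow_le_rpow (by positivity) hlow (by norm_num : (0:ℝ) ≤ 1/2)
      have h1 : ((f (γ u)) ^ 2 : ℝ) ^ ((1:ℝ)/2) = f (γ u) := by
        rw [← Real.rpow_natCast (f (γ u)) 2, ← Real.rpow_mul hfγ.le]
        norm_num
      rwa [h1] at h0
    · have h0 := Real.rpow_le_rpow hκ'u.le hupp (one_div_nonneg.mpr hm.le)
      rwa [← Real.rpow_mul hfγ.le, mul_one_div, div_self hm.ne', Real.rpow_one] at h0
  -- bracketing of the ratio
  have brack : ∀ ε ∈ Set.Ioo (0:ℝ) (2 - b), ∀ᶠ u in atTop,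
      g (finv ((κ' / u) ^ ((1:ℝ)/2))) / g (finv ((κ / u) ^ ((1:ℝ)/2)))
        ≤ g (γ u) / g (α u) ∧
      g (γ u) / g (α u) ≤
        g (finv ((κ' / u) ^ ((1:ℝ)/(2 - b - ε)))) / g (finv ((κ / u) ^ ((1:ℝ)/2))) := by
    intro ε hε
    filter_upwards [keyf ε hε, eventually_gt_atTop (0:ℝ)] with u hu hupos
    obtain ⟨hγpos, ha, hbb⟩ := hu
    have hκ'u : 0 < κ' / u := div_pos hκ' hupos
    have hsu : 0 < (κ / u) ^ ((1:ℝ)/2) := Real.rpow_pos_of_pos (div_pos hκ hupos) _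
    have hp1 : 0 < (κ' / u) ^ ((1:ℝ)/2) := Real.rpow_pos_of_pos hκ'u _
    have hp2 : 0 < (κ' / u) ^ ((1:ℝ)/(2 - b - ε)) := Real.rpow_pos_of_pos hκ'u _
    have e1 : finv ((κ' / u) ^ ((1:ℝ)/2)) ≤ γ u := by
      apply hf_le_rev _ _ (hfinv_pos _ hp1) hγpos
      rw [hffinv _ hp1]
      exact ha
    have e2 : γ u ≤ finv ((κ' / u) ^ ((1:ℝ)/(2 - b - ε))) := by
      apply hf_le_rev _ _ hγpos (hfinv_pos _ hp2)
      rw [hffinv _ hp2]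
      exact hbb
    have hgα : 0 < g (finv ((κ / u) ^ ((1:ℝ)/2))) := hg_pos _ (hfinv_pos _ hsu).le
    rw [hα u hupos]
    constructor
    · exact hdivle _ _ _ hgα (hg_mono.monotoneOn (Set.mem_Ici.mpr (hfinv_pos _ hp1).le)
        (Set.mem_Ici.mpr hγpos.le) e1)
    · exact hdivle _ _ _ hgα (hg_mono.monotoneOn (Set.mem_Ici.mpr hγpos.le)
        (Set.mem_Ici.mpr (hfinv_pos _ hp2).le) e2)
  have hε₀ : ((2 - b)/2 : ℝ) ∈ Set.Ioo (0:ℝ) (2 - b) := by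
    constructor <;> [linarith; linarith]
  have hm' : ∀ ε ∈ Set.Ioo (0:ℝ) (2 - b), (1:ℝ) ≤ 2 / (2 - b - ε) := by
    intro ε hε
    rw [le_div_iff₀ (by linarith [hε.2] : (0:ℝ) < 2 - b - ε)]
    linarith [hε.1]
  -- eventual upper bounds for the ratio
  have hupper : ∀ ε ∈ Set.Ioo (0:ℝ) (2 - b), ∀ b' : ℝ, (2 / (2 - b - ε)) ^ ω < b' →
      ∀ᶠ u in atTop, g (γ u) / g (α u) ≤ b' := by
    intro ε hε b' hb'
    have hc₂ : 0 < (κ' / κ) ^ ((1:ℝ)/(2 - b - ε)) := Real.rpow_pos_of_pos (div_pos hκ' hκ) _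
    have hEC := lemC _ hc₂ _ (hm' ε hε) b' hb'
    filter_upwards [brack ε hε, hs_tendsto.eventually hEC, eventually_gt_atTop (0:ℝ)]
      with u hbr hlt hupos
    refine le_trans hbr.2 (le_of_lt ?_)
    have hid := hident ((1:ℝ)/(2 - b - ε)) u hupos
    rw [show (2:ℝ) * ((1:ℝ)/(2 - b - ε)) = 2 / (2 - b - ε) by ring] at hid
    rw [hid]
    exact hlt
  -- eventual lower bounds for the ratio
  have hc₁ : 0 < (κ' / κ) ^ ((1:ℝ)/2) := Real.rpow_pos_of_pos (div_pos hκ' hκ) _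
  have hlower : ∀ ε' : ℝ, 0 < ε' → ∀ᶠ u in atTop, (1 + ε')⁻¹ ≤ g (γ u) / g (α u) := by
    intro ε' hε'
    have hinv : 0 < ((κ' / κ) ^ ((1:ℝ)/2))⁻¹ := inv_pos.mpr hc₁
    have hEC := lemC _ hinv 1 le_rfl (1 + ε') (by rw [Real.one_rpow]; linarith)
    have hcomp : Tendsto (fun u : ℝ => (κ' / κ) ^ ((1:ℝ)/2) * (κ / u) ^ ((1:ℝ)/2))
        atTop (𝓝[>] 0) := (hconstmul _ hc₁).comp hs_tendsto
    filter_upwards [brack _ hε₀, hcomp.eventually hEC, eventually_gt_atTop (0:ℝ)]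
      with u hbr hlt hupos
    have hsu : 0 < (κ / u) ^ ((1:ℝ)/2) := Real.rpow_pos_of_pos (div_pos hκ hupos) _
    rw [Real.rpow_one, show ((κ' / κ) ^ ((1:ℝ)/2))⁻¹ *
        ((κ' / κ) ^ ((1:ℝ)/2) * (κ / u) ^ ((1:ℝ)/2)) = (κ / u) ^ ((1:ℝ)/2) by
      field_simp] at hlt
    have hid := hident ((1:ℝ)/2) u hupos
    rw [show (2:ℝ) * ((1:ℝ)/2) = (1:ℝ) by ring, Real.rpow_one] at hid
    rw [hid] at hbr
    refine le_trans ?_ hbr.1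
    have hga : 0 < g (finv ((κ' / κ) ^ ((1:ℝ)/2) * (κ / u) ^ ((1:ℝ)/2))) :=
      hg_pos _ (hfinv_pos _ (mul_pos hc₁ hsu)).le
    have hgb : 0 < g (finv ((κ / u) ^ ((1:ℝ)/2))) := hg_pos _ (hfinv_pos _ hsu).le
    rw [div_lt_iff₀ hga] at hlt
    have h9 : (0:ℝ) < 1 + ε' := by linarith
    rw [le_div_iff₀ hgb]
    have h10 := mul_lt_mul_of_pos_left hlt (inv_pos.mpr h9)
    rw [← mul_assoc, inv_mul_cancel₀ h9.ne', one_mul] at h10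
    linarith
  -- boundedness facts
  have hbdd_above : IsBoundedUnder (· ≤ ·) atTop (fun u => g (γ u) / g (α u)) :=
    ⟨(2/(2 - b - (2 - b)/2)) ^ ω + 1, eventually_map.mpr
      (hupper _ hε₀ _ (lt_add_one _))⟩
  have hbdd_below : IsBoundedUnder (· ≥ ·) atTop (fun u => g (γ u) / g (α u)) := by
    refine ⟨0, eventually_map.mpr ?_⟩
    filter_upwards [hγ_lim.eventually_ge_atTop 0, eventually_gt_atTop (0:ℝ)] with u h1 h2
    have hgα : 0 < g (α u) := by
      rw [hα u h2]
      exact hg_pos _ (hfinv_pos _ (Real.rpow_pos_of_pos (div_pos hκ h2) _)).le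
    exact div_nonneg (hg_pos _ h1).le hgα.le
  have hcob_le : IsCoboundedUnder (· ≤ ·) atTop (fun u => g (γ u) / g (α u)) :=
    hbdd_below.isCoboundedUnder_le
  have hcob_ge : IsCoboundedUnder (· ≥ ·) atTop (fun u => g (γ u) / g (α u)) :=
    hbdd_above.isCoboundedUnder_ge
  have hlimsup_le : ∀ ε ∈ Set.Ioo (0:ℝ) (2 - b),
      limsup (fun u => g (γ u) / g (α u)) atTop ≤ (2/(2 - b - ε)) ^ ω := by
    intro ε hε
    by_contra hcon
    push_neg at hcon
    obtain ⟨b', hb'1, hb'2⟩ := exists_between hcon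
    exact absurd (limsup_le_of_le hcob_le (hupper ε hε b' hb'1)) (not_le.mpr hb'2)
  refine ⟨part1, ⟨?_, ?_, ?_⟩, ?_⟩
  · -- 1 ≤ liminf
    have h1 : Tendsto (fun ε' : ℝ => (1 + ε')⁻¹) (𝓝[>] (0:ℝ)) (𝓝 1) := by
      have h2 : ContinuousAt (fun ε' : ℝ => (1 + ε')⁻¹) 0 :=
        ContinuousAt.inv₀ (by fun_prop) (by norm_num)
      have h3 := h2.tendsto
      norm_num at h3
      exact h3.mono_left nhdsWithin_le_nhds
    refine le_of_tendsto h1 ?_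
    filter_upwards [self_mem_nhdsWithin] with ε' hε'
    exact le_liminf_of_le hcob_ge (hlower ε' hε')
  · exact liminf_le_limsup hbdd_above hbdd_below
  · -- limsup bound
    have hG : Tendsto (fun ε : ℝ => (2/(2 - b - ε)) ^ ω) (𝓝[>] (0:ℝ))
        (𝓝 ((2/(2 - b)) ^ ω)) := by
      have hne : (2 - b - (0:ℝ)) ≠ 0 := ne_of_gt (by linarith)
      have hcont : ContinuousAt (fun ε : ℝ => (2/(2 - b - ε)) ^ ω) 0 := by
        apply ContinuousAt.rpow_const
        · exact ContinuousAt.div continuousAt_const (by fun_prop) hne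
        · exact Or.inr hω
      have h3 := hcont.tendsto
      simp only [sub_zero] at h3
      exact h3.mono_left nhdsWithin_le_nhds
    refine ge_of_tendsto hG ?_
    filter_upwards [Ioo_mem_nhdsGT (by linarith : (0:ℝ) < 2 - b)] with ε hε
    exact hlimsup_le ε hε
  · -- part (iii)
    intro δ hδ
    have main : ∀ δ' : ℝ, 0 < δ' → Tendsto
        (fun u : ℝ => g (γ u) ^ 2 * Real.exp (K' * t * g (γ u)) / u ^ δ')
        atTop (𝓝 0) := by
      intro δ hδ
      have hm₀ : (0:ℝ) < (2 - b)/2 := by linarith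
      have hkey := keyf _ hε₀
      have hEε : (0:ℝ) < δ * ((2 - b)/2) / (4 * (K' * t)) :=
        div_pos (mul_pos hδ hm₀) (by positivity)
      have hF1 : ∀ᶠ u in atTop,
          g (γ u) / |Real.log (f (γ u))| < δ * ((2 - b)/2) / (4 * (K' * t)) :=
        hγ_lim.eventually (hDlim.eventually_lt_const hEε)
      have hF3 : ∀ᶠ u in atTop, R ≤ γ u := hγ_lim.eventually_ge_atTop R
      have hF4 : ∀ᶠ u in atTop, 1 + |Real.log κ'| ≤ Real.log u :=
        Real.tendsto_log_atTop.eventually_ge_atTop _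
      have hlimB : Tendsto (fun u : ℝ => (δ/(2*(K'*t)))^2 * (Real.log u ^ 2 / u ^ (δ/2)))
          atTop (𝓝 0) := by
        have h0 : Tendsto (fun u : ℝ => Real.log u ^ 2 / u ^ (δ/2)) atTop (𝓝 0) := by
          have h1 := (isLittleO_log_rpow_rpow_atTop 2
            (show (0:ℝ) < δ/2 by linarith)).tendsto_div_nhds_zero
          refine Tendsto.congr' ?_ h1
          filter_upwards [eventually_ge_atTop (1:ℝ)] with x hx
          congr 1
          rw [show (2:ℝ) = ((2:ℕ):ℝ) by norm_num, Real.rpow_natCast]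
        simpa using h0.const_mul ((δ/(2*(K'*t)))^2)
      apply squeeze_zero' ?_ ?_ hlimB
      · filter_upwards [eventually_gt_atTop (0:ℝ)] with u h1
        exact div_nonneg (mul_nonneg (sq_nonneg _) (Real.exp_pos _).le)
          (Real.rpow_pos_of_pos h1 δ).le
      · filter_upwards [hkey, hF1, hF3, hF4, eventually_gt_atTop (0:ℝ),
          hγ_lim.eventually_gt_atTop 0] with u hk hu1 hu3 hu4 hupos hγpos
        obtain ⟨-, -, hk3⟩ := hk
        rw [show (2:ℝ) - b - (2 - b)/2 = (2 - b)/2 by ring] at hk3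
        have hu0 : u ≠ 0 := hupos.ne'
        have hfγ0 : 0 < f (γ u) := hf_pos _ hγpos
        have hfγ1 : f (γ u) < 1 := hfR1 _ hu3
        have hlogf : Real.log (f (γ u)) < 0 := Real.log_neg hfγ0 hfγ1
        have hLpos : 0 < -Real.log (f (γ u)) := neg_pos.mpr hlogf
        have hgγ : 0 < g (γ u) := hg_pos _ hγpos.le
        have hgL : g (γ u) < δ * ((2 - b)/2) / (4 * (K' * t)) * (-Real.log (f (γ u))) := by
          rw [abs_of_neg hlogf] at hu1
          exact (div_lt_iff₀ hLpos).mp hu1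
        have hL_le : -Real.log (f (γ u)) ≤ (1/((2 - b)/2)) * (Real.log u - Real.log κ') := by
          have h0 : Real.log ((κ'/u) ^ ((1:ℝ)/((2 - b)/2))) ≤ Real.log (f (γ u)) :=
            Real.log_le_log (Real.rpow_pos_of_pos (div_pos hκ' hupos) _) hk3
          rw [Real.log_rpow (div_pos hκ' hupos), Real.log_div hκ'.ne' hu0] at h0
          linarith [h0]
        have hlogu1 : (1:ℝ) ≤ Real.log u := by
          have := abs_nonneg (Real.log κ'); linarith
        have hsub : Real.log u - Real.log κ' ≤ 2 * Real.log u := by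
          have := neg_abs_le (Real.log κ'); linarith
        have hg_le : g (γ u) ≤ δ/(2*(K'*t)) * Real.log u := by
          have h2 : -Real.log (f (γ u)) ≤ (1/((2 - b)/2)) * (2 * Real.log u) :=
            le_trans hL_le (mul_le_mul_of_nonneg_left hsub (by positivity))
          have h3 : g (γ u) ≤
              δ * ((2 - b)/2) / (4 * (K' * t)) * ((1/((2 - b)/2)) * (2 * Real.log u)) :=
            le_trans hgL.le (mul_le_mul_of_nonneg_left h2 hEε.le)
          calc g (γ u) ≤ _ := h3
            _ = δ/(2*(K'*t)) * Real.log u := by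
              have h2b : (2:ℝ) - b ≠ 0 := by linarith
              field_simp [h2b, hKt.ne']
              ring
        have hKg : K' * t * g (γ u) ≤ δ/2 * Real.log u := by
          calc K' * t * g (γ u) ≤ K' * t * (δ/(2*(K'*t)) * Real.log u) :=
                mul_le_mul_of_nonneg_left hg_le hKt.le
            _ = δ/2 * Real.log u := by field_simp
        have hexp_le : Real.exp (K' * t * g (γ u)) ≤ u ^ (δ/2) := by
          rw [Real.rpow_def_of_pos hupos]
          exact Real.exp_le_exp.mpr (by linarith [hKg])
        have hnum : g (γ u) ^ 2 * Real.exp (K' * t * g (γ u)) ≤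
            (δ/(2*(K'*t)) * Real.log u) ^ 2 * u ^ (δ/2) :=
          mul_le_mul (pow_le_pow_left₀ hgγ.le hg_le 2) hexp_le (Real.exp_pos _).le (sq_nonneg _)
        have hupow : (0:ℝ) < u ^ (δ/2) := Real.rpow_pos_of_pos hupos _
        have hsplit : (u:ℝ) ^ δ = u ^ (δ/2) * u ^ (δ/2) := by
          rw [← Real.rpow_add hupos]; ring_nf
        rw [hsplit]
        calc g (γ u) ^ 2 * Real.exp (K' * t * g (γ u)) / (u ^ (δ/2) * u ^ (δ/2))
            ≤ (δ/(2*(K'*t)) * Real.log u) ^ 2 * u ^ (δ/2) / (u ^ (δ/2) * u ^ (δ/2)) :=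
              hdivle _ _ _ (mul_pos hupow hupow) hnum
          _ = (δ/(2*(K'*t)))^2 * (Real.log u ^ 2 / u ^ (δ/2)) := by
              rw [mul_pow]
              field_simp [hupow.ne']


    exact (main (δ:ℝ) (by exact_mod_cast hδ)).congr (fun u => by rw [Real.rpow_natCast])
end

section
/- lim_{u→∞} (log η(γ(u)) − log(γ(u) − σ(γ(u)))) / g(α(u)) = 0, and for every δ > 0, lim_{u→∞} v(γ(u)) / u^δ = 0, where v(r) := g(r)² e^{K̃ t g(r)} η(r)/(r − σ(r)). -/
open Filter Topology Set

set_option maxHeartbeats 1600000 in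
/-- `(log η(γ(u)) − log(γ(u) − σ(γ(u))))/g(α(u)) → 0`, and for every `δ > 0`,
`v(γ(u))/u^δ → 0`, where `v(r) = g(r)² e^{K' t g(r)} η(r)/(r − σ(r))`. -/
theorem stmt13
    (d : ℕ) (hd : 1 ≤ d)
    (f finv : ℝ → ℝ)
    (hf_pos : ∀ r > 0, 0 < f r)
    (hf_anti : StrictAntiOn f (Set.Ioi 0))
    (hf_cont : ContinuousOn f (Set.Ioi 0))
    (hf_bij : Set.BijOn f (Set.Ioi 0) (Set.Ioi 0))
    (hf_inv : Set.InvOn finv f (Set.Ioi 0) (Set.Ioi 0))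
    (g : ℝ → ℝ)
    (hg_pos : ∀ r ≥ 0, 0 < g r)
    (hg_mono : StrictMonoOn g (Set.Ici 0))
    (hg_cont : ContinuousOn g (Set.Ici 0))
    (hg_lim : Tendsto g atTop atTop)
    -- Condition (D)
    (hD : ∃ R > 0, (∀ r ≥ R, f r < 1) ∧
      AntitoneOn (fun r => g r / |Real.log (f r)|) (Set.Ici R) ∧
      Tendsto (fun r => g r / |Real.log (f r)|) atTop (𝓝 0))
    -- Rate condition on g with exponent ω
    (ω : ℝ) (hω : 0 ≤ ω)
    (hrate : ∀ c > 0, ∀ lam ≥ (1:ℝ),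
      limsup (fun s => g (finv (c * s ^ lam)) / g (finv s)) (𝓝[>] (0:ℝ)) ≤ lam ^ ω)
    (K' t κ κ' : ℝ) (hK' : 0 < K') (ht : 0 < t) (hκ : 0 < κ) (hκ' : 0 < κ')
    (η : ℝ → ℝ)
    (hη_pos : ∀ r ≥ 0, 0 < η r)
    (hη_mono : MonotoneOn η (Set.Ici 0))
    (hη_cont : ContinuousOn η (Set.Ici 0))
    (hη_int : MeasureTheory.IntegrableOn (fun r => (η r)⁻¹) (Set.Ici 1))
    (b : ℝ) (hb : b ∈ Set.Ico (0:ℝ) 2)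
    (hb_anti : ∃ R : ℝ, AntitoneOn
      (fun r => (((d : ℝ) - 1) * Real.log r + Real.log (η r)) / |Real.log (f r)|)
      (Set.Ici R))
    (hb_lim : Tendsto
      (fun r => (((d : ℝ) - 1) * Real.log r + Real.log (η r)) / |Real.log (f r)|)
      atTop (𝓝 b))
    (H : ℝ → ℝ)
    (hH : ∀ r, H r = f r ^ 2 * r ^ (d - 1) * η r * Real.exp (K' * t * g r))
    (u₀ : ℝ) (γ : ℝ → ℝ)
    (hγ : ∀ u ≥ u₀, H (γ u) = κ' / u)
    (hγ_lim : Tendsto γ atTop atTop)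
    (α : ℝ → ℝ) (hα : ∀ u > 0, α u = finv ((κ / u) ^ ((1:ℝ) / 2)))
    (σ : ℝ → ℝ)
    (hσ_pos : ∀ r ≥ 0, 0 < σ r)
    (hσ_mono : MonotoneOn σ (Set.Ici 0))
    (hσ_cont : ContinuousOn σ (Set.Ici 0))
    (hσ_lt : ∀ r ≥ 1, σ r < r)
    (hησ : Tendsto (fun r => (Real.log (η r) - Real.log (r - σ r)) / g r) atTop (𝓝 0)) :
    Tendsto (fun u => (Real.log (η (γ u)) - Real.log (γ u - σ (γ u))) / g (α u))
      atTop (𝓝 0) ∧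
    ∀ δ > 0,
      Tendsto
        (fun u => g (γ u) ^ 2 * Real.exp (K' * t * g (γ u)) * η (γ u) / (γ u - σ (γ u)) / u ^ δ)
        atTop (𝓝 0) := by
  obtain ⟨R, hR, hfR, _hanti, hDlim⟩ := hD
  obtain ⟨hb0, hb2⟩ := hb
  -- basic inverse function facts
  have hfinv : ∀ y : ℝ, 0 < y → 0 < finv y ∧ f (finv y) = y := by
    intro y hy
    obtain ⟨x, hx, hfx⟩ := hf_bij.surjOn hy
    have hxy : finv y = x := by rw [← hfx]; exact hf_inv.1 hx
    rw [hxy]; exact ⟨hx, hfx⟩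
  have hle_finv : ∀ x y : ℝ, 0 < x → 0 < y → y ≤ f x → x ≤ finv y := by
    intro x y hx hy hyx
    by_contra h
    push_neg at h
    have h1 : f x < f (finv y) := hf_anti (hfinv y hy).1 hx h
    rw [(hfinv y hy).2] at h1; linarith
  have hfinv_tendsto : Tendsto finv (𝓝[>] (0:ℝ)) atTop := by
    rw [tendsto_atTop]
    intro M
    have hM'pos : (0:ℝ) < max M 1 := lt_of_lt_of_le one_pos (le_max_right _ _)
    have hfM' : 0 < f (max M 1) := hf_pos _ hM'pos
    filter_upwards [Ioo_mem_nhdsGT_of_mem (Set.left_mem_Ico.2 hfM')] with x hx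
    exact le_trans (le_max_left M 1) (hle_finv _ _ hM'pos hx.1 hx.2.le)
  -- the function s
  set s : ℝ → ℝ := fun u => (κ / u) ^ ((1:ℝ)/2) with hs_def
  have hs_pos : ∀ u : ℝ, 0 < u → 0 < s u := fun u hu =>
    Real.rpow_pos_of_pos (div_pos hκ hu) _
  have hs_lim : Tendsto s atTop (𝓝[>] (0:ℝ)) := by
    have h1 : Tendsto (fun u : ℝ => κ / u) atTop (𝓝 0) :=
      tendsto_const_nhds.div_atTop tendsto_id
    have hc : ContinuousAt (fun x : ℝ => x ^ ((1:ℝ)/2)) 0 :=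
      Real.continuousAt_rpow_const 0 _ (Or.inr (by norm_num))
    have h2 : Tendsto s atTop (𝓝 0) := by
      have := hc.tendsto.comp h1
      simpa [hs_def, Real.zero_rpow (by norm_num : ((1:ℝ)/2) ≠ 0), Function.comp_def] using this
    refine tendsto_nhdsWithin_of_tendsto_nhds_of_eventually_within _ h2 ?_
    filter_upwards [eventually_gt_atTop 0] with u hu
    exact hs_pos u hu
  have hα_pos : ∀ᶠ u in atTop, 0 < α u ∧ f (α u) = s u := by
    filter_upwards [eventually_gt_atTop 0] with u hu
    rw [hα u hu]; exact hfinv _ (hs_pos u hu)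
  -- constants
  set β : ℝ := (2 - b) / 2 with hβ_def
  have hβ : 0 < β := by rw [hβ_def]; linarith
  have hβ2 : β ≤ 2 := by rw [hβ_def]; linarith
  set lam : ℝ := 2 / β with hlam_def
  have hlam : 1 ≤ lam := by rw [hlam_def]; rw [le_div_iff₀ hβ]; linarith
  set c : ℝ := (κ' / κ) ^ ((1:ℝ)/β) with hc_def
  have hc : 0 < c := Real.rpow_pos_of_pos (div_pos hκ' hκ) _
  have hKT : 0 < K' * t := mul_pos hK' ht
  -- Step A : eventually H r ≤ f r ^ β
  have hstepA : ∀ᶠ r in atTop, H r ≤ f r ^ β := by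
    have e1 : ∀ᶠ r in atTop,
        (((d:ℝ)-1) * Real.log r + Real.log (η r)) / |Real.log (f r)| < b + β/2 :=
      hb_lim.eventually_lt_const (by linarith)
    have e2 : ∀ᶠ r in atTop, g r / |Real.log (f r)| < β / (2 * (K'*t)) :=
      hDlim.eventually_lt_const (by positivity)
    filter_upwards [e1, e2, eventually_ge_atTop R, eventually_ge_atTop 1]
      with r h1 h2 hrR hr1
    have hr0 : (0:ℝ) < r := lt_of_lt_of_le one_pos hr1
    have hfr : 0 < f r := hf_pos r hr0
    have hfr1 : f r < 1 := hfR r hrR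
    have hlogf : Real.log (f r) < 0 := Real.log_neg hfr hfr1
    have habs : |Real.log (f r)| = -Real.log (f r) := abs_of_neg hlogf
    have hL : 0 < |Real.log (f r)| := abs_pos.2 (ne_of_lt hlogf)
    have h1' : ((d:ℝ)-1) * Real.log r + Real.log (η r)
        ≤ (b + β/2) * (-Real.log (f r)) := by
      rw [← habs]; exact le_of_lt ((div_lt_iff₀ hL).1 h1)
    have h2' : g r ≤ (β / (2*(K'*t))) * (-Real.log (f r)) := by
      rw [← habs]; exact le_of_lt ((div_lt_iff₀ hL).1 h2)
    have hηr : 0 < η r := hη_pos r hr0.le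
    have hHpos : 0 < H r := by rw [hH]; positivity
    have hcast : ((d - 1 : ℕ) : ℝ) = (d:ℝ) - 1 := by
      rw [Nat.cast_sub hd]; norm_num
    have hlogH : Real.log (H r) = 2 * Real.log (f r)
        + (((d:ℝ)-1) * Real.log r + Real.log (η r)) + K' * t * g r := by
      rw [hH r, Real.log_mul (by positivity) (Real.exp_ne_zero _),
        Real.log_mul (by positivity) (ne_of_gt hηr),
        Real.log_mul (by positivity) (by positivity),
        Real.log_exp, Real.log_pow, Real.log_pow, hcast]
      push_cast
      ring
    have h2'' : K' * t * g r ≤ (β/2) * (-Real.log (f r)) := by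
      have := mul_le_mul_of_nonneg_left h2' hKT.le
      have heq : K' * t * ((β / (2*(K'*t))) * (-Real.log (f r)))
          = (β/2) * (-Real.log (f r)) := by
        field_simp
      linarith [heq ▸ this]
    have hlogle : Real.log (H r) ≤ β * Real.log (f r) := by
      rw [hlogH]
      have hbb : b + β/2 + β/2 - 2 = -β := by rw [hβ_def]; ring
      nlinarith [hL]
    calc H r = Real.exp (Real.log (H r)) := (Real.exp_log hHpos).symm
      _ ≤ Real.exp (β * Real.log (f r)) := Real.exp_le_exp.2 hlogle
      _ = f r ^ β := by rw [Real.rpow_def_of_pos hfr]; ring_nf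
  -- Step B : eventually c * s u ^ lam ≤ f (γ u)
  have hstepB : ∀ᶠ u in atTop, c * s u ^ lam ≤ f (γ u) := by
    filter_upwards [hγ_lim.eventually hstepA,
      hγ_lim.eventually (eventually_ge_atTop 1),
      eventually_ge_atTop (max u₀ 1)] with u hAe hγ1 hu
    have hu1 : (1:ℝ) ≤ u := le_trans (le_max_right _ _) hu
    have hu0 : (0:ℝ) < u := lt_of_lt_of_le one_pos hu1
    have hγu0 : (0:ℝ) < γ u := lt_of_lt_of_le one_pos hγ1
    have hfγ : 0 < f (γ u) := hf_pos _ hγu0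
    have hHeq : H (γ u) = κ' / u := hγ u (le_trans (le_max_left _ _) hu)
    have hkey : κ' / u ≤ f (γ u) ^ β := by rw [← hHeq]; exact hAe
    have h1β : (0:ℝ) < 1/β := by positivity
    have hmono := Real.rpow_le_rpow (div_pos hκ' hu0).le hkey h1β.le
    have hpow : (f (γ u) ^ β) ^ ((1:ℝ)/β) = f (γ u) := by
      rw [← Real.rpow_mul hfγ.le]
      rw [show β * ((1:ℝ)/β) = 1 by field_simp, Real.rpow_one]
    rw [hpow] at hmono
    have hcalc : c * s u ^ lam = (κ' / u) ^ ((1:ℝ)/β) := by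
      have hsu : s u ^ lam = (κ / u) ^ ((1:ℝ)/β) := by
        rw [hs_def]
        rw [← Real.rpow_mul (div_pos hκ hu0).le]
        congr 1
        rw [hlam_def]; ring
      rw [hsu, hc_def, ← Real.mul_rpow (div_pos hκ' hκ).le (div_pos hκ hu0).le]
      congr 1
      field_simp
    linarith [hcalc ▸ hmono]
  -- Step C : eventually g (γ u) ≤ M * g (α u)
  have hlam0 : (0:ℝ) < lam := lt_of_lt_of_le one_pos hlam
  set M : ℝ := lam ^ ω + 1 with hM_def
  have hM : (0:ℝ) < M := by
    have : (0:ℝ) < lam ^ ω := Real.rpow_pos_of_pos hlam0 _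
    rw [hM_def]; linarith
  have hlam1 : (1:ℝ) < lam := by
    rw [hlam_def, lt_div_iff₀ hβ]
    have : β ≤ 1 := by rw [hβ_def]; linarith
    linarith
  have hrate' : ∀ᶠ x in 𝓝[>] (0:ℝ), g (finv (c * x ^ lam)) / g (finv x) < M := by
    apply eventually_lt_of_limsup_lt
    · refine lt_of_le_of_lt (hrate c hc lam hlam) ?_
      rw [hM_def]; linarith
    · -- boundedness above, via the antitone part of condition (D)
      apply Filter.isBoundedUnder_of_eventually_le (a := lam + |Real.log c|)
      have hclam : Tendsto (fun x : ℝ => c * x ^ (lam - 1)) (𝓝[>] 0) (𝓝 0) := by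
        have hcont : ContinuousAt (fun x : ℝ => x ^ (lam - 1)) 0 :=
          Real.continuousAt_rpow_const 0 _ (Or.inr (by linarith))
        have h0 : (0:ℝ) ^ (lam - 1) = 0 := Real.zero_rpow (by intro h; rw [sub_eq_zero] at h; linarith)
        have := (hcont.tendsto.const_mul c).mono_left
          (nhdsWithin_le_nhds : 𝓝[>] (0:ℝ) ≤ 𝓝 0)
        simpa [h0] using this
      have hev1 : ∀ᶠ x in 𝓝[>] (0:ℝ), c * x ^ (lam - 1) < 1 :=
        hclam.eventually_lt_const one_pos
      have hev2 : ∀ᶠ x in 𝓝[>] (0:ℝ), max R 1 ≤ finv x :=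
        hfinv_tendsto.eventually (eventually_ge_atTop _)
      filter_upwards [hev1, hev2,
        Ioo_mem_nhdsGT_of_mem (Set.left_mem_Ico.2 (Real.exp_pos (-1)))]
        with x h1 h2 hx
      obtain ⟨hx0, hxe⟩ := hx
      have hlogx : Real.log x < -1 := by
        calc Real.log x < Real.log (Real.exp (-1)) := Real.log_lt_log hx0 hxe
          _ = -1 := Real.log_exp _
      have hx1 : x < 1 := (Real.log_neg_iff hx0).1 (by linarith)
      have hxlam : (0:ℝ) < x ^ lam := Real.rpow_pos_of_pos hx0 _
      have hcx : 0 < c * x ^ lam := mul_pos hc hxlam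
      have hcxle : c * x ^ lam ≤ x := by
        have hsplit : x ^ lam = x ^ (lam - 1) * x := by
          rw [← Real.rpow_add_one (ne_of_gt hx0)]
          ring_nf
        have hx1p : (0:ℝ) < x ^ (lam - 1) := Real.rpow_pos_of_pos hx0 _
        calc c * x ^ lam = (c * x ^ (lam - 1)) * x := by rw [hsplit]; ring
          _ ≤ 1 * x := by
              apply mul_le_mul_of_nonneg_right h1.le hx0.le
          _ = x := one_mul x
      have hr2pos : 0 < finv x := (hfinv _ hx0).1
      have hr1pos : 0 < finv (c * x ^ lam) := (hfinv _ hcx).1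
      have hf2 : f (finv x) = x := (hfinv _ hx0).2
      have hf1 : f (finv (c * x ^ lam)) = c * x ^ lam := (hfinv _ hcx).2
      have hr1r2 : finv x ≤ finv (c * x ^ lam) := by
        apply hle_finv _ _ hr2pos hcx
        rw [hf2]; exact hcxle
      have hr2R : R ≤ finv x := le_trans (le_max_left R 1) h2
      have hr1R : R ≤ finv (c * x ^ lam) := le_trans hr2R hr1r2
      have hratio := _hanti (Set.mem_Ici.2 hr2R) (Set.mem_Ici.2 hr1R) hr1r2
      simp only at hratio
      -- logs
      have hlogcx : Real.log (c * x ^ lam) = Real.log c + lam * Real.log x := by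
        rw [Real.log_mul (ne_of_gt hc) (ne_of_gt hxlam), Real.log_rpow hx0]
      have hlogcx_neg : Real.log (c * x ^ lam) < 0 :=
        Real.log_neg hcx (lt_of_le_of_lt hcxle hx1)
      have hlog1 : |Real.log (f (finv (c * x ^ lam)))| = -(Real.log c + lam * Real.log x) := by
        rw [hf1, abs_of_neg hlogcx_neg, hlogcx]
      have hlog2 : |Real.log (f (finv x))| = -Real.log x := by
        rw [hf2, abs_of_neg (by linarith : Real.log x < 0)]
      have habs2pos : (0:ℝ) < |Real.log (f (finv x))| := by rw [hlog2]; linarith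
      have habs1pos : (0:ℝ) < |Real.log (f (finv (c * x ^ lam)))| := by
        rw [hlog1]
        have hneg : Real.log c + lam * Real.log x < 0 := by
          rw [← hlogcx]; exact hlogcx_neg
        linarith
      have hg2 : 0 < g (finv x) := hg_pos _ hr2pos.le
      have hg1 : 0 < g (finv (c * x ^ lam)) := hg_pos _ hr1pos.le
      have hAB : g (finv (c * x ^ lam)) * |Real.log (f (finv x))|
          ≤ g (finv x) * |Real.log (f (finv (c * x ^ lam)))| :=
        (div_le_div_iff₀ habs1pos habs2pos).1 hratio
      have hBle : |Real.log (f (finv (c * x ^ lam)))|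
          ≤ (lam + |Real.log c|) * |Real.log (f (finv x))| := by
        rw [hlog1, hlog2]
        have h5 : |Real.log c| * 1 ≤ |Real.log c| * (-Real.log x) :=
          mul_le_mul_of_nonneg_left (by linarith) (abs_nonneg _)
        have h6 : -Real.log c ≤ |Real.log c| := neg_le_abs _
        nlinarith [h5, h6]
      rw [div_le_iff₀ hg2]
      nlinarith [mul_le_mul_of_nonneg_left hBle hg2.le, habs2pos]
  have hstepC : ∀ᶠ u in atTop, g (γ u) ≤ M * g (α u) := by
    filter_upwards [hstepB, hs_lim.eventually hrate', hα_pos,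
      hγ_lim.eventually (eventually_ge_atTop 1), eventually_gt_atTop 0]
      with u hB hrat hαp hγ1 hu0
    have hγu0 : (0:ℝ) < γ u := lt_of_lt_of_le one_pos hγ1
    have hsu := hs_pos u hu0
    have hcs : 0 < c * s u ^ lam := by positivity
    have hle : γ u ≤ finv (c * s u ^ lam) := hle_finv _ _ hγu0 hcs hB
    have hg1 : g (γ u) ≤ g (finv (c * s u ^ lam)) :=
      hg_mono.monotoneOn hγu0.le (hfinv _ hcs).1.le hle
    have hαeq : α u = finv (s u) := hα u hu0
    have hgα : 0 < g (α u) := hg_pos _ hαp.1.le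
    have hgα' : 0 < g (finv (s u)) := by rw [← hαeq]; exact hgα
    have h2 : g (finv (c * s u ^ lam)) < M * g (finv (s u)) :=
      (div_lt_iff₀ hgα').1 hrat
    rw [← hαeq] at h2
    linarith
  -- Part 1
  have hA0 : Tendsto (fun u =>
      (Real.log (η (γ u)) - Real.log (γ u - σ (γ u))) / g (γ u)) atTop (𝓝 0) :=
    hησ.comp hγ_lim
  have part1 : Tendsto (fun u =>
      (Real.log (η (γ u)) - Real.log (γ u - σ (γ u))) / g (α u)) atTop (𝓝 0) := by
    apply squeeze_zero_norm'
      (a := fun u => M * |(Real.log (η (γ u)) - Real.log (γ u - σ (γ u))) / g (γ u)|)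
    · filter_upwards [hstepC, hγ_lim.eventually (eventually_ge_atTop 1), hα_pos]
        with u hC hγ1 hαp
      have hγu0 : (0:ℝ) < γ u := lt_of_lt_of_le one_pos hγ1
      have hgγ : 0 < g (γ u) := hg_pos _ hγu0.le
      have hgα : 0 < g (α u) := hg_pos _ hαp.1.le
      set N := Real.log (η (γ u)) - Real.log (γ u - σ (γ u)) with hN
      rw [Real.norm_eq_abs, abs_div, abs_of_pos hgα, abs_div, abs_of_pos hgγ,
        mul_div_assoc', div_le_div_iff₀ hgα hgγ]
      nlinarith [abs_nonneg N]
    · have := hA0.abs.const_mul M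
      simpa using this
  refine ⟨part1, ?_⟩
  -- g(α u) is o(log u)
  have hgα_log : Tendsto (fun u => g (α u) / Real.log u) atTop (𝓝 0) := by
    have hα_lim : Tendsto α atTop atTop := by
      refine Tendsto.congr' ?_ (hfinv_tendsto.comp hs_lim)
      filter_upwards [eventually_gt_atTop 0] with u hu
      exact (hα u hu).symm
    have hQ : Tendsto (fun u => g (α u) / |Real.log (f (α u))|) atTop (𝓝 0) :=
      hDlim.comp hα_lim
    apply squeeze_zero_norm' (a := fun u => g (α u) / |Real.log (f (α u))|) ?_ hQ
    filter_upwards [hα_pos,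
      eventually_ge_atTop (Real.exp (|Real.log κ| + 1))] with u hαp hu
    have hu0 : (0:ℝ) < u := lt_of_lt_of_le (Real.exp_pos _) hu
    have hlogu : |Real.log κ| + 1 ≤ Real.log u := by
      rw [← Real.log_exp (|Real.log κ| + 1)]
      exact Real.log_le_log (Real.exp_pos _) hu
    have hlogu0 : 0 < Real.log u := by
      have := abs_nonneg (Real.log κ); linarith
    have hgα : 0 < g (α u) := hg_pos _ hαp.1.le
    have hlogs : Real.log (f (α u)) = (1/2) * (Real.log κ - Real.log u) := by
      rw [hαp.2, hs_def]
      rw [Real.log_rpow (div_pos hκ hu0), Real.log_div (ne_of_gt hκ) (ne_of_gt hu0)]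
    have hlogs_neg : Real.log (f (α u)) < 0 := by
      rw [hlogs]
      have : Real.log κ ≤ |Real.log κ| := le_abs_self _
      nlinarith
    have habs2 : |Real.log (f (α u))| = (1/2) * (Real.log u - Real.log κ) := by
      rw [abs_of_neg hlogs_neg, hlogs]; ring
    have hle2 : |Real.log (f (α u))| ≤ Real.log u := by
      rw [habs2]
      have : -Real.log κ ≤ |Real.log κ| := neg_le_abs _
      linarith
    have habs_pos : 0 < |Real.log (f (α u))| := abs_pos.2 (ne_of_lt hlogs_neg)
    rw [Real.norm_eq_abs, abs_div, abs_of_pos hgα, abs_of_pos hlogu0]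
    exact div_le_div_of_nonneg_left hgα.le habs_pos hle2
  intro δ hδ
  have hδR : (0:ℝ) < (δ:ℝ) := by exact_mod_cast hδ
  set C : ℝ := K' * t + 3 with hC_def
  have hC0 : (0:ℝ) < C := by rw [hC_def]; linarith
  set V : ℝ → ℝ := fun u =>
    g (γ u) ^ 2 * Real.exp (K' * t * g (γ u)) * η (γ u) / (γ u - σ (γ u)) with hV_def
  have hlogv : ∀ᶠ u in atTop, Real.log (V u) ≤ C * g (γ u) := by
    have hev : ∀ᶠ r in atTop,
        (Real.log (η r) - Real.log (r - σ r)) / g r < 1 :=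
      hησ.eventually_lt_const one_pos
    filter_upwards [hγ_lim.eventually hev, hγ_lim.eventually (eventually_ge_atTop 1)]
      with u h1 hγ1
    have hr0 : (0:ℝ) < γ u := lt_of_lt_of_le one_pos hγ1
    have hg0 : 0 < g (γ u) := hg_pos _ hr0.le
    have hη0 : 0 < η (γ u) := hη_pos _ hr0.le
    have hrσ : 0 < γ u - σ (γ u) := sub_pos.2 (hσ_lt _ hγ1)
    have h1' : Real.log (η (γ u)) - Real.log (γ u - σ (γ u)) ≤ g (γ u) := by
      have := (div_lt_one hg0).1 h1; linarith
    have hlg : Real.log (g (γ u)) ≤ g (γ u) :=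
      le_trans (Real.log_le_sub_one_of_pos hg0) (by linarith)
    rw [hV_def]
    simp only
    rw [Real.log_div (by positivity) (ne_of_gt hrσ),
      Real.log_mul (by positivity) (ne_of_gt hη0),
      Real.log_mul (by positivity) (Real.exp_ne_zero _),
      Real.log_exp, Real.log_pow, hC_def]
    push_cast
    linarith
  have hsmall : ∀ᶠ u in atTop, C * g (γ u) ≤ (δ:ℝ)/2 * Real.log u := by
    have hpos : (0:ℝ) < (δ:ℝ)/2 / (C * M) := by positivity
    filter_upwards [hstepC, hgα_log.eventually_lt_const hpos,
      eventually_gt_atTop 1, hα_pos] with u hC2 hlt hu1 hαp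
    have hlogu0 : 0 < Real.log u := Real.log_pos hu1
    have hgα : 0 < g (α u) := hg_pos _ hαp.1.le
    have h3 : g (α u) < (δ:ℝ)/2 / (C * M) * Real.log u := (div_lt_iff₀ hlogu0).1 hlt
    have key : C * (M * ((δ:ℝ)/2 / (C * M) * Real.log u)) = (δ:ℝ)/2 * Real.log u := by
      field_simp
    calc C * g (γ u) ≤ C * (M * g (α u)) := by nlinarith
      _ ≤ C * (M * ((δ:ℝ)/2 / (C * M) * Real.log u)) := by
          have h4 := mul_le_mul_of_nonneg_left h3.le hM.le
          exact mul_le_mul_of_nonneg_left h4 hC0.le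
      _ = (δ:ℝ)/2 * Real.log u := key
  have hVeq : ∀ᶠ u in atTop,
      Real.exp (Real.log (V u) - (δ:ℝ) * Real.log u) = V u / u ^ δ := by
    filter_upwards [hγ_lim.eventually (eventually_ge_atTop 1), eventually_gt_atTop 0]
      with u hγ1 hu0
    have hr0 : (0:ℝ) < γ u := lt_of_lt_of_le one_pos hγ1
    have hg0 : 0 < g (γ u) := hg_pos _ hr0.le
    have hη0 : 0 < η (γ u) := hη_pos _ hr0.le
    have hrσ : 0 < γ u - σ (γ u) := sub_pos.2 (hσ_lt _ hγ1)
    have hV0 : 0 < V u := by rw [hV_def]; positivity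
    rw [← Real.rpow_natCast u δ, Real.rpow_def_of_pos hu0, Real.exp_sub,
      Real.exp_log hV0, mul_comm (Real.log u) ((δ:ℝ))]
  have hexp_bot : Tendsto (fun u => Real.log (V u) - (δ:ℝ) * Real.log u) atTop atBot := by
    apply tendsto_atBot_mono' atTop
      (show (fun u => Real.log (V u) - (δ:ℝ) * Real.log u)
        ≤ᶠ[atTop] fun u => -((δ:ℝ)/2) * Real.log u from ?_)
    · exact Tendsto.const_mul_atTop_of_neg
        (show (-((δ:ℝ)/2):ℝ) < 0 by linarith) Real.tendsto_log_atTop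
    · filter_upwards [hlogv, hsmall] with u h1 h2
      have : Real.log (V u) ≤ (δ:ℝ)/2 * Real.log u := le_trans h1 h2
      linarith
  have hfin := Real.tendsto_exp_atBot.comp hexp_bot
  refine Tendsto.congr' ?_ hfin
  filter_upwards [hVeq] with u hu
  exact hu
end

section
/- Let d ≥ 1 be an integer, a ∈ (0,1), m > 0, c_m := m^{1/(2a)}, and let f(r) := r^{−(d+2a+1)/2} e^{−c_m r} for r > 0 (a strictly decreasing continuous bijection of (0,∞) onto (0,∞), with inverse f⁻¹). Let θ > 0 and g(r) := r^θ. Then: (i) for every c > 0 and λ ≥ 1, lim_{s→0⁺} g(f⁻¹(c s^λ)) / g(f⁻¹(s)) = λ^θ; (ii) for every κ > 0, setting α(u) := f⁻¹((κ/u)^{1/2}), one has lim_{u→∞} g(α(u)) / ((log u)/(2 c_m))^θ = 1. -/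
open Filter Topology Set

/-- Relativistic profile `f(r) = r^{−(d+2a+1)/2} e^{−c_m r}` with power-type
potential profile `g(r) = r^θ`:
(i) for every `c > 0` and `λ ≥ 1`, `g(f⁻¹(c s^λ))/g(f⁻¹(s)) → λ^θ` as `s → 0⁺`;
(ii) for every `κ > 0`, with `α(u) = f⁻¹((κ/u)^{1/2})`,
`g(α(u)) / ((log u)/(2 c_m))^θ → 1` as `u → ∞`. -/
theorem stmt17
    (d : ℕ) (hd : 1 ≤ d) (a m : ℝ) (ha : a ∈ Set.Ioo (0:ℝ) 1) (hm : 0 < m)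
    (cm : ℝ) (hcm : cm = m ^ (1 / (2 * a)))
    (f finv g : ℝ → ℝ)
    (hf : ∀ r > 0, f r = r ^ (-(((d : ℝ) + 2 * a + 1) / 2)) * Real.exp (-(cm * r)))
    (hf_anti : StrictAntiOn f (Set.Ioi 0))
    (hf_cont : ContinuousOn f (Set.Ioi 0))
    (hf_bij : Set.BijOn f (Set.Ioi 0) (Set.Ioi 0))
    (hf_inv : Set.InvOn finv f (Set.Ioi 0) (Set.Ioi 0))
    (θ : ℝ) (hθ : 0 < θ)
    (hg : ∀ r > 0, g r = r ^ θ) :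
    (∀ c > 0, ∀ lam ≥ (1:ℝ),
      Tendsto (fun s => g (finv (c * s ^ lam)) / g (finv s)) (𝓝[>] (0:ℝ))
        (𝓝 (lam ^ θ))) ∧
    (∀ κ > 0,
      Tendsto (fun u => g (finv ((κ / u) ^ ((1:ℝ) / 2))) / (Real.log u / (2 * cm)) ^ θ)
        atTop (𝓝 1)) := by
  obtain ⟨ha0, ha1⟩ := ha
  have hcm0 : 0 < cm := hcm ▸ Real.rpow_pos_of_pos hm _
  set p : ℝ := ((d : ℝ) + 2 * a + 1) / 2 with hp
  have hp0 : 0 < p := by positivity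
  -- finv maps (0,∞) to (0,∞)
  have hfinv_mem : ∀ s > (0:ℝ), 0 < finv s := by
    intro s hs
    obtain ⟨r, hr, hrs⟩ := hf_bij.surjOn (mem_Ioi.mpr hs)
    have h1 : finv (f r) = r := hf_inv.1 hr
    rw [hrs] at h1
    rw [h1]; exact hr
  have hfr : ∀ s > (0:ℝ), f (finv s) = s := fun s hs => hf_inv.2 (mem_Ioi.mpr hs)
  -- log identity
  have hlog : ∀ s > (0:ℝ), -Real.log s = cm * finv s + p * Real.log (finv s) := by
    intro s hs
    have hr := hfinv_mem s hs
    have h1 : f (finv s) = s := hfr s hs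
    rw [hf _ hr] at h1
    have h2 := congrArg Real.log h1.symm
    rw [Real.log_mul (Real.rpow_pos_of_pos hr _).ne' (Real.exp_ne_zero _),
      Real.log_rpow hr, Real.log_exp] at h2
    rw [h2]; ring
  -- finv tends to ∞ as s → 0⁺
  have hfinv_top : Tendsto finv (𝓝[>] (0:ℝ)) atTop := by
    rw [tendsto_atTop]
    intro b
    have hM : (0:ℝ) < max b 1 := lt_of_lt_of_le one_pos (le_max_right _ _)
    have hfM : 0 < f (max b 1) := hf_bij.mapsTo (mem_Ioi.mpr hM)
    filter_upwards [Ioo_mem_nhdsGT hfM] with s hs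
    have hfs : 0 < finv s := hfinv_mem s hs.1
    by_contra hlt
    push_neg at hlt
    have h1 : finv s < max b 1 := lt_of_lt_of_le hlt (le_max_left _ _)
    have h2 := hf_anti (mem_Ioi.mpr hfs) (mem_Ioi.mpr hM) h1
    rw [hfr s hs.1] at h2
    exact absurd hs.2 (not_lt.mpr h2.le)
  -- the basic asymptotic function
  have hphi : Tendsto (fun r : ℝ => cm * r / (cm * r + p * Real.log r)) atTop (𝓝 1) := by
    have h0 : Tendsto (fun r : ℝ => Real.log r / r) atTop (𝓝 0) :=
      Real.isLittleO_log_id_atTop.tendsto_div_nhds_zero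
    have h1 : Tendsto (fun r : ℝ => 1 + (p / cm) * (Real.log r / r)) atTop
        (𝓝 (1 + (p / cm) * 0)) := (tendsto_const_nhds.mul h0).const_add 1
    rw [mul_zero, add_zero] at h1
    have h2 : Tendsto (fun r : ℝ => (1 + (p / cm) * (Real.log r / r))⁻¹) atTop (𝓝 1) := by
      simpa using h1.inv₀ one_ne_zero
    refine h2.congr' ?_
    filter_upwards [eventually_gt_atTop (0:ℝ)] with r hr
    have he : 1 + (p / cm) * (Real.log r / r) = (cm * r + p * Real.log r) / (cm * r) := by
      field_simp
    rw [he, inv_div]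
  -- cm · finv s / (−log s) → 1 as s → 0⁺
  have hC : Tendsto (fun s => cm * finv s / (-Real.log s)) (𝓝[>] (0:ℝ)) (𝓝 1) := by
    refine (hphi.comp hfinv_top).congr' ?_
    filter_upwards [self_mem_nhdsWithin] with s hs
    simp only [Function.comp]
    rw [hlog s hs]
  -- −log s → ∞ as s → 0⁺
  have hneg : Tendsto (fun s : ℝ => -Real.log s) (𝓝[>] (0:ℝ)) atTop :=
    tendsto_neg_atBot_atTop.comp Real.tendsto_log_nhdsGT_zero
  constructor
  · -- Part (i)
    intro c hc lam hlam
    have hlam0 : (0:ℝ) < lam := lt_of_lt_of_le one_pos hlam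
    -- c·s^lam → 0⁺
    have htr : Tendsto (fun s : ℝ => c * s ^ lam) (𝓝[>] (0:ℝ)) (𝓝[>] (0:ℝ)) := by
      rw [tendsto_nhdsWithin_iff]
      constructor
      · have hc' : ContinuousAt (fun s : ℝ => s ^ lam) 0 :=
          Real.continuousAt_rpow_const 0 lam (Or.inr hlam0.le)
        have h1 : Tendsto (fun s : ℝ => s ^ lam) (𝓝[>] (0:ℝ)) (𝓝 ((0:ℝ) ^ lam)) :=
          hc'.tendsto.mono_left nhdsWithin_le_nhds
        rw [Real.zero_rpow hlam0.ne'] at h1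
        simpa using h1.const_mul c
      · filter_upwards [self_mem_nhdsWithin] with s hs
        exact mem_Ioi.mpr (mul_pos hc (Real.rpow_pos_of_pos hs lam))
    -- (−log(c s^lam))/(−log s) → lam
    have hB : Tendsto (fun s => (-Real.log (c * s ^ lam)) / (-Real.log s))
        (𝓝[>] (0:ℝ)) (𝓝 lam) := by
      have h0 : Tendsto (fun s : ℝ => (-Real.log c) / (-Real.log s) + lam)
          (𝓝[>] (0:ℝ)) (𝓝 (0 + lam)) :=
        (tendsto_const_nhds.div_atTop hneg).add tendsto_const_nhds
      rw [zero_add] at h0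
      refine h0.congr' ?_
      filter_upwards [Ioo_mem_nhdsGT one_pos] with s hs
      have hls : Real.log s ≠ 0 := (Real.log_neg hs.1 hs.2).ne
      rw [Real.log_mul hc.ne' (Real.rpow_pos_of_pos hs.1 lam).ne', Real.log_rpow hs.1,
        div_add' _ _ _ (neg_ne_zero.mpr hls)]
      congr 1
      ring
    -- finv(c s^lam)/finv s → lam
    have hD : Tendsto (fun s => finv (c * s ^ lam) / finv s) (𝓝[>] (0:ℝ)) (𝓝 lam) := by
      have hA : Tendsto (fun s => cm * finv (c * s ^ lam) / (-Real.log (c * s ^ lam)))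
          (𝓝[>] (0:ℝ)) (𝓝 1) := hC.comp htr
      have hmain := (hA.mul hB).div hC one_ne_zero
      rw [one_mul, div_one] at hmain
      refine hmain.congr' ?_
      filter_upwards [Ioo_mem_nhdsGT one_pos,
        htr.eventually (Ioo_mem_nhdsGT one_pos)] with s hs hx
      have hls : Real.log s ≠ 0 := (Real.log_neg hs.1 hs.2).ne
      have hlx : Real.log (c * s ^ lam) ≠ 0 := (Real.log_neg hx.1 hx.2).ne
      have hfx : (0:ℝ) < finv (c * s ^ lam) := hfinv_mem _ hx.1
      have hfs : (0:ℝ) < finv s := hfinv_mem _ hs.1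
      simp only [Pi.div_apply]
      field_simp
    have hpow : Tendsto (fun s => (finv (c * s ^ lam) / finv s) ^ θ)
        (𝓝[>] (0:ℝ)) (𝓝 (lam ^ θ)) := hD.rpow_const (Or.inl hlam0.ne')
    refine hpow.congr' ?_
    filter_upwards [self_mem_nhdsWithin,
      htr.eventually self_mem_nhdsWithin] with s hs hx
    rw [hg _ (hfinv_mem _ hx), hg _ (hfinv_mem _ hs),
      Real.div_rpow (hfinv_mem _ hx).le (hfinv_mem _ hs).le]
  · -- Part (ii)
    intro κ hκ
    have hs_tend : Tendsto (fun u : ℝ => (κ / u) ^ ((1:ℝ) / 2)) atTop (𝓝[>] (0:ℝ)) := by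
      rw [tendsto_nhdsWithin_iff]
      constructor
      · have h0 : Tendsto (fun u : ℝ => κ / u) atTop (𝓝 0) :=
          tendsto_const_nhds.div_atTop tendsto_id
        have hc' : ContinuousAt (fun x : ℝ => x ^ ((1:ℝ) / 2)) 0 :=
          Real.continuousAt_rpow_const 0 _ (Or.inr (by norm_num))
        have h1 := (hc'.tendsto).comp h0
        rwa [Real.zero_rpow (by norm_num : (1:ℝ)/2 ≠ 0)] at h1
      · filter_upwards [eventually_gt_atTop (0:ℝ)] with u hu
        exact mem_Ioi.mpr (Real.rpow_pos_of_pos (div_pos hκ hu) _)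
    have hA : Tendsto (fun u => cm * finv ((κ / u) ^ ((1:ℝ) / 2)) /
        (-Real.log ((κ / u) ^ ((1:ℝ) / 2)))) atTop (𝓝 1) := hC.comp hs_tend
    have hB2 : Tendsto (fun u : ℝ => (-Real.log ((κ / u) ^ ((1:ℝ) / 2))) * 2 / Real.log u)
        atTop (𝓝 1) := by
      have h0 : Tendsto (fun u : ℝ => 1 - Real.log κ / Real.log u) atTop (𝓝 (1 - 0)) :=
        tendsto_const_nhds.sub (tendsto_const_nhds.div_atTop Real.tendsto_log_atTop)
      rw [sub_zero] at h0
      refine h0.congr' ?_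
      filter_upwards [eventually_gt_atTop (max 1 κ)] with u hu
      have hu1 : (1:ℝ) < u := lt_of_le_of_lt (le_max_left _ _) hu
      have hu0 : (0:ℝ) < u := lt_trans one_pos hu1
      have hlu : Real.log u ≠ 0 := (Real.log_pos hu1).ne'
      rw [Real.log_rpow (div_pos hκ hu0), Real.log_div hκ.ne' hu0.ne']
      field_simp
      ring
    have hmul := hA.mul hB2
    rw [one_mul] at hmul
    have hpow : Tendsto (fun u => ((cm * finv ((κ / u) ^ ((1:ℝ) / 2)) /
        (-Real.log ((κ / u) ^ ((1:ℝ) / 2)))) *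
        ((-Real.log ((κ / u) ^ ((1:ℝ) / 2))) * 2 / Real.log u)) ^ θ) atTop
        (𝓝 ((1:ℝ) ^ θ)) := hmul.rpow_const (Or.inl one_ne_zero)
    rw [Real.one_rpow] at hpow
    refine hpow.congr' ?_
    filter_upwards [eventually_gt_atTop (max 1 κ),
      hs_tend.eventually (Ioo_mem_nhdsGT one_pos)] with u hu hx
    have hu1 : (1:ℝ) < u := lt_of_le_of_lt (le_max_left _ _) hu
    have hu0 : (0:ℝ) < u := lt_trans one_pos hu1
    have hlu : (0:ℝ) < Real.log u := Real.log_pos hu1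
    have hlx : Real.log ((κ / u) ^ ((1:ℝ) / 2)) ≠ 0 := (Real.log_neg hx.1 hx.2).ne
    have hfx : (0:ℝ) < finv ((κ / u) ^ ((1:ℝ) / 2)) := hfinv_mem _ hx.1
    rw [hg _ hfx,
      ← Real.div_rpow hfx.le (by positivity : (0:ℝ) ≤ Real.log u / (2 * cm))]
    congr 1
    field_simp
end

section
/- Let d ≥ 1 be an integer, a ∈ (0,1), m > 0, c_m := m^{1/(2a)}, and let f(r) := r^{−(d+2a+1)/2} e^{−c_m r} for r > 0 (a strictly decreasing continuous bijection of (0,∞) onto (0,∞), with inverse f⁻¹). Let θ > 0 and g(r) := (log r)^θ for r ≥ e. Then: (i) for every c > 0 and λ ≥ 1, lim_{s→0⁺} g(f⁻¹(c s^λ)) / g(f⁻¹(s)) = 1; (ii) for every κ > 0, setting α(u) := f⁻¹((κ/u)^{1/2}), one has lim_{u→∞} g(α(u)) / (log log u)^θ = 1. -/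
open Filter Topology Set

lemma stmt18_ratio {α : Type*} {F : Filter α} {A B : α → ℝ} {M : ℝ}
    (hA : Tendsto A F atTop) (h : ∀ᶠ x in F, |B x - A x| ≤ M) :
    Tendsto (fun x => B x / A x) F (𝓝 1) := by
  have hM0 : Tendsto (fun x => M / A x) F (𝓝 0) := tendsto_const_nhds.div_atTop hA
  have hlo : Tendsto (fun x => 1 - M / A x) F (𝓝 1) := by
    simpa using tendsto_const_nhds.sub hM0
  have hhi : Tendsto (fun x => 1 + M / A x) F (𝓝 1) := by
    simpa using tendsto_const_nhds.add hM0
  refine tendsto_of_tendsto_of_tendsto_of_le_of_le' hlo hhi ?_ ?_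
  · filter_upwards [hA.eventually_gt_atTop 0, h] with x hx h'
    have h1 := (abs_le.1 h').1
    have h2 : (A x - M) / A x ≤ B x / A x := by gcongr; linarith
    calc 1 - M / A x = (A x - M) / A x := by rw [sub_div, div_self hx.ne']
      _ ≤ B x / A x := h2
  · filter_upwards [hA.eventually_gt_atTop 0, h] with x hx h'
    have h1 := (abs_le.1 h').2
    have h2 : B x / A x ≤ (A x + M) / A x := by gcongr; linarith
    calc B x / A x ≤ (A x + M) / A x := h2
      _ = 1 + M / A x := by rw [add_div, div_self hx.ne']

lemma stmt18_logshift (p q : ℝ) (hp : 0 < p) :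
    Tendsto (fun x : ℝ => Real.log (p * x + q) - Real.log x) atTop (𝓝 (Real.log p)) := by
  have hq : Tendsto (fun x : ℝ => q / x) atTop (𝓝 0) :=
    tendsto_const_nhds.div_atTop tendsto_id
  have h0 : Tendsto (fun x : ℝ => p + q / x) atTop (𝓝 p) := by
    simpa using (tendsto_const_nhds (α := ℝ) (x := p)).add hq
  have hlog : Tendsto Real.log (𝓝 p) (𝓝 (Real.log p)) :=
    (Real.continuousAt_log hp.ne').tendsto
  apply (hlog.comp h0).congr'
  filter_upwards [eventually_gt_atTop 0, eventually_gt_atTop ((|q| + 1) / p)] with x hx0 hx1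
  have hpos : 0 < p * x + q := by
    have h3 : |q| + 1 < x * p := (div_lt_iff₀ hp).1 hx1
    have h4 : -q ≤ |q| := neg_le_abs q
    nlinarith
  have he : p + q / x = (p * x + q) / x := by field_simp
  simp only [Function.comp_apply, he, Real.log_div hpos.ne' hx0.ne']

/-- eventual bound from a tendsto -/
lemma stmt18_evbd {α : Type*} {F : Filter α} {G : α → ℝ} {L : ℝ}
    (h : Tendsto G F (𝓝 L)) : ∀ᶠ x in F, |G x| ≤ |L| + 1 := by
  have := Metric.tendsto_nhds.mp h 1 one_pos
  filter_upwards [this] with x hx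
  have : |G x - L| < 1 := by rwa [Real.dist_eq] at hx
  calc |G x| = |G x - L + L| := by ring_nf
    _ ≤ |G x - L| + |L| := abs_add_le _ _
    _ ≤ |L| + 1 := by linarith

/-- Relativistic profile `f(r) = r^{−(d+2a+1)/2} e^{−c_m r}` with
power-logarithmic potential profile `g(r) = (log r)^θ`:
(i) for every `c > 0` and `λ ≥ 1`, `g(f⁻¹(c s^λ))/g(f⁻¹(s)) → 1` as `s → 0⁺`;
(ii) for every `κ > 0`, with `α(u) = f⁻¹((κ/u)^{1/2})`,
`g(α(u)) / (log log u)^θ → 1` as `u → ∞`. -/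
theorem stmt18
    (d : ℕ) (hd : 1 ≤ d) (a m : ℝ) (ha : a ∈ Set.Ioo (0:ℝ) 1) (hm : 0 < m)
    (cm : ℝ) (hcm : cm = m ^ (1 / (2 * a)))
    (f finv g : ℝ → ℝ)
    (hf : ∀ r > 0, f r = r ^ (-(((d : ℝ) + 2 * a + 1) / 2)) * Real.exp (-(cm * r)))
    (hf_anti : StrictAntiOn f (Set.Ioi 0))
    (hf_cont : ContinuousOn f (Set.Ioi 0))
    (hf_bij : Set.BijOn f (Set.Ioi 0) (Set.Ioi 0))
    (hf_inv : Set.InvOn finv f (Set.Ioi 0) (Set.Ioi 0))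
    (θ : ℝ) (hθ : 0 < θ)
    (hg : ∀ r ≥ Real.exp 1, g r = Real.log r ^ θ) :
    (∀ c > 0, ∀ lam ≥ (1:ℝ),
      Tendsto (fun s => g (finv (c * s ^ lam)) / g (finv s)) (𝓝[>] (0:ℝ)) (𝓝 1)) ∧
    (∀ κ > 0,
      Tendsto (fun u => g (finv ((κ / u) ^ ((1:ℝ) / 2))) / Real.log (Real.log u) ^ θ)
        atTop (𝓝 1)) := by
  obtain ⟨ha0, ha1⟩ := ha
  set b : ℝ := ((d : ℝ) + 2 * a + 1) / 2 with hb
  have hd1 : (1:ℝ) ≤ (d:ℝ) := by exact_mod_cast hd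
  have hb1 : 1 < b := by rw [hb]; nlinarith
  have hc0 : 0 < cm := by rw [hcm]; positivity
  have hbc1 : 1 < b + cm := by linarith
  -- finv maps into Ioi 0 and is a right inverse
  have hfinv_mem : ∀ s ∈ Ioi (0:ℝ), finv s ∈ Ioi 0 := by
    intro s hs
    obtain ⟨r, hr, hrs⟩ := hf_bij.surjOn hs
    rw [← hrs, hf_inv.1 hr]; exact hr
  have hffinv : ∀ s ∈ Ioi (0:ℝ), f (finv s) = s := fun s hs => hf_inv.2 hs
  -- finv tends to infinity
  have hfinv_top : Tendsto finv (𝓝[>] (0:ℝ)) atTop := by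
    rw [tendsto_atTop]
    intro R
    have hR' : (max R 1) ∈ Ioi (0:ℝ) := Set.mem_Ioi.2 (lt_of_lt_of_le one_pos (le_max_right _ _))
    have hfR : 0 < f (max R 1) := hf_bij.mapsTo hR'
    have hmem : Ioo (0:ℝ) (f (max R 1)) ∈ 𝓝[>] (0:ℝ) :=
      Ioo_mem_nhdsGT_of_mem ⟨le_refl _, hfR⟩
    filter_upwards [hmem] with s hs
    by_contra hcon
    push_neg at hcon
    have hr := hfinv_mem s hs.1
    have hlt : finv s < max R 1 := lt_of_lt_of_le hcon (le_max_left _ _)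
    have := hf_anti hr hR' hlt
    rw [hffinv s hs.1] at this
    exact absurd hs.2 (not_lt.2 this.le)
  -- the log identity
  have hlogid : ∀ s ∈ Ioi (0:ℝ),
      -Real.log s = b * Real.log (finv s) + cm * finv s := by
    intro s hs
    have hr := hfinv_mem s hs
    have hs' : s = (finv s) ^ (-b) * Real.exp (-(cm * finv s)) := by
      conv_lhs => rw [← hffinv s hs]
      rw [hf (finv s) hr]
    have hL : Real.log s = Real.log ((finv s) ^ (-b) * Real.exp (-(cm * finv s))) := by
      rw [← hs']
    rw [Real.log_mul (Real.rpow_pos_of_pos hr _).ne' (Real.exp_ne_zero _),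
      Real.log_rpow hr, Real.log_exp] at hL
    rw [hL]; ring
  set M1 : ℝ := Real.log (b + cm) + |Real.log cm| with hM1def
  -- key eventual bound
  have hM1 : ∀ᶠ s in 𝓝[>] (0:ℝ),
      |Real.log (finv s) - Real.log (-Real.log s)| ≤ M1 := by
    filter_upwards [hfinv_top.eventually_ge_atTop 1, self_mem_nhdsWithin] with s h1 hs
    have hr0 : (0:ℝ) < finv s := lt_of_lt_of_le one_pos h1
    have hL := hlogid s hs
    set L := -Real.log s with hLdef
    set r := finv s with hrdef
    have hlogr0 : 0 ≤ Real.log r := Real.log_nonneg h1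
    have hL1 : cm * r ≤ L := by nlinarith
    have hL2 : L ≤ (b + cm) * r := by
      have hrr : Real.log r ≤ r := (Real.log_le_sub_one_of_pos hr0).trans (by linarith)
      nlinarith
    have hLpos : 0 < L := lt_of_lt_of_le (by positivity) hL1
    have hub : Real.log r ≤ Real.log L - Real.log cm := by
      have h2 : r ≤ L / cm := (le_div_iff₀ hc0).2 (by linarith)
      calc Real.log r ≤ Real.log (L / cm) := Real.log_le_log hr0 h2
        _ = Real.log L - Real.log cm := Real.log_div hLpos.ne' hc0.ne'
    have hlb : Real.log L - Real.log (b + cm) ≤ Real.log r := by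
      have h2 : L / (b + cm) ≤ r := (div_le_iff₀ (by linarith)).2 (by linarith)
      calc Real.log L - Real.log (b + cm) = Real.log (L / (b + cm)) :=
            (Real.log_div hLpos.ne' (by positivity)).symm
        _ ≤ Real.log r := Real.log_le_log (by positivity) h2
    have hlogbc : 0 ≤ Real.log (b + cm) := Real.log_nonneg hbc1.le
    have habs1 : -Real.log cm ≤ |Real.log cm| := neg_le_abs _
    have habs2 : Real.log cm ≤ |Real.log cm| := le_abs_self _
    rw [abs_le]
    constructor <;> [nlinarith; nlinarith]
  have hge : ∀ᶠ s in 𝓝[>] (0:ℝ), Real.exp 1 ≤ finv s := hfinv_top.eventually_ge_atTop _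
  have hnlog : Tendsto (fun s : ℝ => -Real.log s) (𝓝[>] (0:ℝ)) atTop :=
    tendsto_neg_atBot_atTop.comp Real.tendsto_log_nhdsGT_zero
  have hAinf : Tendsto (fun s => Real.log (finv s)) (𝓝[>] (0:ℝ)) atTop :=
    Real.tendsto_log_atTop.comp hfinv_top
  have hrpow1 : Tendsto (fun y : ℝ => y ^ θ) (𝓝 1) (𝓝 1) := by
    have := (Real.continuousAt_rpow_const 1 θ (Or.inl one_ne_zero)).tendsto
    rwa [Real.one_rpow] at this
  constructor
  · intro c hc lam hlam
    have hlam0 : (0:ℝ) < lam := lt_of_lt_of_le one_pos hlam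
    set σ : ℝ → ℝ := fun s => c * s ^ lam with hσdef
    have hσ : Tendsto σ (𝓝[>] (0:ℝ)) (𝓝[>] (0:ℝ)) := by
      rw [tendsto_nhdsWithin_iff]
      constructor
      · have h1 : Tendsto (fun s : ℝ => s ^ lam) (𝓝 0) (𝓝 0) := by
          have := (Real.continuousAt_rpow_const 0 lam (Or.inr hlam0.le)).tendsto
          rwa [Real.zero_rpow hlam0.ne'] at this
        have := (h1.mono_left (nhdsWithin_le_nhds (s := Ioi (0:ℝ)))).const_mul c
        simpa using this
      · filter_upwards [self_mem_nhdsWithin] with s hs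
        have h0s : (0:ℝ) < s := hs
        simp only [hσdef, Set.mem_Ioi]
        positivity
    -- difference of log(-log ·)
    have hkey : ∀ᶠ s in 𝓝[>] (0:ℝ),
        -Real.log (σ s) = lam * (-Real.log s) + (-Real.log c) := by
      filter_upwards [self_mem_nhdsWithin] with s hs
      have : (0:ℝ) < s := hs
      rw [hσdef]
      simp only
      rw [Real.log_mul hc.ne' (by positivity), Real.log_rpow this]
      ring
    have hshift := (stmt18_logshift lam (-Real.log c) hlam0).comp hnlog
    have hdiff2 : Tendsto (fun s => Real.log (-Real.log (σ s)) - Real.log (-Real.log s))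
        (𝓝[>] (0:ℝ)) (𝓝 (Real.log lam)) := by
      apply hshift.congr'
      filter_upwards [hkey] with s hk
      simp only [Function.comp_apply, hk]
    have hdiff2' := stmt18_evbd hdiff2
    -- combine
    have hBA : Tendsto (fun s => Real.log (finv (σ s)) / Real.log (finv s))
        (𝓝[>] (0:ℝ)) (𝓝 1) := by
      apply stmt18_ratio hAinf (M := M1 + (|Real.log lam| + 1) + M1)
      filter_upwards [hσ.eventually hM1, hdiff2', hM1] with s h1 h2 h3
      calc |Real.log (finv (σ s)) - Real.log (finv s)|
          ≤ |Real.log (finv (σ s)) - Real.log (-Real.log (σ s))|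
            + |Real.log (-Real.log (σ s)) - Real.log (-Real.log s)|
            + |Real.log (-Real.log s) - Real.log (finv s)| := by
            have t1 := abs_sub_le (Real.log (finv (σ s))) (Real.log (-Real.log (σ s)))
              (Real.log (finv s))
            have t2 := abs_sub_le (Real.log (-Real.log (σ s))) (Real.log (-Real.log s))
              (Real.log (finv s))
            have t3 := abs_sub_le (Real.log (-Real.log s)) (Real.log (finv s))
              (Real.log (finv s))
            linarith
        _ ≤ M1 + (|Real.log lam| + 1) + M1 := by
            rw [abs_sub_comm] at h3
            gcongr
    have := hrpow1.comp hBA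
    apply this.congr'
    filter_upwards [hσ.eventually hge, hge] with s h1 h2
    have hl1 : (1:ℝ) ≤ Real.log (finv (σ s)) := by
      rw [← Real.log_exp 1]; exact Real.log_le_log (Real.exp_pos 1) h1
    have hl2 : (1:ℝ) ≤ Real.log (finv s) := by
      rw [← Real.log_exp 1]; exact Real.log_le_log (Real.exp_pos 1) h2
    simp only [Function.comp_apply]
    rw [Real.div_rpow (by linarith) (by linarith), hg _ h1, hg _ h2]
  · intro κ hκ
    set σ : ℝ → ℝ := fun u => (κ / u) ^ ((1:ℝ)/2) with hσdef
    have hσ : Tendsto σ atTop (𝓝[>] (0:ℝ)) := by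
      rw [tendsto_nhdsWithin_iff]
      constructor
      · have h1 : Tendsto (fun u : ℝ => κ / u) atTop (𝓝 0) :=
          tendsto_const_nhds.div_atTop tendsto_id
        have h2 : Tendsto (fun y : ℝ => y ^ ((1:ℝ)/2)) (𝓝 0) (𝓝 0) := by
          have := (Real.continuousAt_rpow_const 0 ((1:ℝ)/2) (Or.inr (by norm_num))).tendsto
          rwa [Real.zero_rpow (by norm_num)] at this
        exact h2.comp h1
      · filter_upwards [eventually_gt_atTop 0] with u hu
        have : (0:ℝ) < κ / u := by positivity
        simp only [hσdef, Set.mem_Ioi]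
        positivity
    have hA2 : Tendsto (fun u => Real.log (Real.log u)) atTop atTop :=
      Real.tendsto_log_atTop.comp Real.tendsto_log_atTop
    have hkey : ∀ᶠ u in atTop,
        -Real.log (σ u) = (1/2 : ℝ) * Real.log u + (-(Real.log κ)/2) := by
      filter_upwards [eventually_gt_atTop 0] with u hu
      have hκu : (0:ℝ) < κ / u := by positivity
      simp only [hσdef]
      rw [Real.log_rpow hκu, Real.log_div hκ.ne' hu.ne']
      ring
    have hshift := (stmt18_logshift (1/2) (-(Real.log κ)/2) (by norm_num)).comp
      Real.tendsto_log_atTop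
    have hdiff2 : Tendsto (fun u => Real.log (-Real.log (σ u)) - Real.log (Real.log u))
        atTop (𝓝 (Real.log (1/2))) := by
      apply hshift.congr'
      filter_upwards [hkey] with u hk
      simp only [Function.comp_apply, hk]
    have hdiff2' := stmt18_evbd hdiff2
    have hBA : Tendsto (fun u => Real.log (finv (σ u)) / Real.log (Real.log u))
        atTop (𝓝 1) := by
      apply stmt18_ratio hA2 (M := M1 + (|Real.log (1/2)| + 1))
      filter_upwards [hσ.eventually hM1, hdiff2'] with u h1 h2
      calc |Real.log (finv (σ u)) - Real.log (Real.log u)|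
          ≤ |Real.log (finv (σ u)) - Real.log (-Real.log (σ u))|
            + |Real.log (-Real.log (σ u)) - Real.log (Real.log u)| := abs_sub_le _ _ _
        _ ≤ M1 + (|Real.log (1/2)| + 1) := by gcongr
    have := hrpow1.comp hBA
    apply this.congr'
    filter_upwards [hσ.eventually hge, hA2.eventually_ge_atTop 0] with u h1 h2
    have hl1 : (1:ℝ) ≤ Real.log (finv (σ u)) := by
      rw [← Real.log_exp 1]; exact Real.log_le_log (Real.exp_pos 1) h1
    simp only [Function.comp_apply]
    rw [Real.div_rpow (by linarith) h2, hg _ h1]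
end
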